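/- arXiv:2210.05994 — 8 statements merged into one kernel-verified Lean document; each statement's English description precedes it below -/
import Mathlib

section
/- Let n ≥ 1 and let F_1, …, F_n : ℝ^d → ℝ^d be operators with average F = (1/n)∑_{i=1}^n F_i. Suppose each F_i is ℓ-cocoercive, F is μ-strongly monotone, and the stepsize satisfies 0 < γ ≤ 1/ℓ. Then the SARAH inner-loop trajectory satisfies 𝔼[‖v^K‖²] ≤ (1 − γμ)^K · ‖F(z⁰)‖². -/
open Finset

noncomputable section

/-- An operator `G : ℝ^d → ℝ^d` is `ℓ`-cocoercive:
`‖G(u) - G(v)‖² ≤ ℓ ⟨G(u) - G(v), u - v⟩` for all `u, v`. -/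
def Cocoercive {d : ℕ} (ℓ : ℝ)
    (G : EuclideanSpace ℝ (Fin d) → EuclideanSpace ℝ (Fin d)) : Prop :=
  ∀ u v : EuclideanSpace ℝ (Fin d),
    ‖G u - G v‖ ^ 2 ≤ ℓ * (inner ℝ (G u - G v) (u - v) : ℝ)

/-- An operator `G : ℝ^d → ℝ^d` is `μ`-strongly monotone:
`⟨G(u) - G(v), u - v⟩ ≥ μ ‖u - v‖²` for all `u, v`. -/
def StronglyMonotone {d : ℕ} (μ : ℝ)
    (G : EuclideanSpace ℝ (Fin d) → EuclideanSpace ℝ (Fin d)) : Prop :=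
  ∀ u v : EuclideanSpace ℝ (Fin d),
    μ * ‖u - v‖ ^ 2 ≤ (inner ℝ (G u - G v) (u - v) : ℝ)

/-- The average operator `F = (1/n) ∑_{i=1}^n F_i`. -/
def opAvg {d n : ℕ} (F : Fin n → EuclideanSpace ℝ (Fin d) → EuclideanSpace ℝ (Fin d)) :
    EuclideanSpace ℝ (Fin d) → EuclideanSpace ℝ (Fin d) :=
  fun z => (n : ℝ)⁻¹ • ∑ i, F i z

/-- One step of the SARAH recursion: from `(z, v)` and index `i`, go to `(z', v')`
with `z' = z - γ v` and `v' = F_i(z') - F_i(z) + v`. -/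
def sarahStep {d n : ℕ} (γ : ℝ)
    (F : Fin n → EuclideanSpace ℝ (Fin d) → EuclideanSpace ℝ (Fin d)) (i : Fin n)
    (p : EuclideanSpace ℝ (Fin d) × EuclideanSpace ℝ (Fin d)) :
    EuclideanSpace ℝ (Fin d) × EuclideanSpace ℝ (Fin d) :=
  (p.1 - γ • p.2, F i (p.1 - γ • p.2) - F i p.1 + p.2)

/-- Run SARAH steps along a list of indices. -/
def sarahRun {d n : ℕ} (γ : ℝ)
    (F : Fin n → EuclideanSpace ℝ (Fin d) → EuclideanSpace ℝ (Fin d)) :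
    EuclideanSpace ℝ (Fin d) × EuclideanSpace ℝ (Fin d) → List (Fin n) →
      EuclideanSpace ℝ (Fin d) × EuclideanSpace ℝ (Fin d)
  | p, [] => p
  | p, i :: l => sarahRun γ F (sarahStep γ F i p) l

/-- The SARAH inner-loop trajectory `(z^k, v^k)` started at `z^0 = z0` with
`v^0 = F(z^0)`, for the index sequence `j : Fin K → Fin n` (so `i_k = j (k-1)`):
`sarahTraj γ F z0 j k = (z^k, v^k)` is obtained by performing the SARAH steps
with the first `k` indices `i_1, …, i_k`. -/
def sarahTraj {d n K : ℕ} (γ : ℝ)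
    (F : Fin n → EuclideanSpace ℝ (Fin d) → EuclideanSpace ℝ (Fin d))
    (z0 : EuclideanSpace ℝ (Fin d)) (j : Fin K → Fin n) (k : ℕ) :
    EuclideanSpace ℝ (Fin d) × EuclideanSpace ℝ (Fin d) :=
  sarahRun γ F (z0, opAvg F z0) ((List.ofFn j).take k)

lemma avg_sub {d n : ℕ} (F : Fin n → EuclideanSpace ℝ (Fin d) → EuclideanSpace ℝ (Fin d))
    (z' z : EuclideanSpace ℝ (Fin d)) :
    opAvg F z' - opAvg F z = (n : ℝ)⁻¹ • ∑ i, (F i z' - F i z) := by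
  simp [opAvg, Finset.sum_sub_distrib, smul_sub]

lemma step_sum_bound {d n : ℕ} (hn : 1 ≤ n) {ℓ μ γ : ℝ} (hℓ : 0 < ℓ) (hγ0 : 0 < γ)
    (hγℓ : γ * ℓ ≤ 1)
    (F : Fin n → EuclideanSpace ℝ (Fin d) → EuclideanSpace ℝ (Fin d))
    (hco : ∀ i, Cocoercive ℓ (F i)) (hsm : StronglyMonotone μ (opAvg F))
    (z v : EuclideanSpace ℝ (Fin d)) :
    ∑ i : Fin n, ‖(sarahStep γ F i (z, v)).2‖ ^ 2 ≤ (n : ℝ) * (1 - γ * μ) * ‖v‖ ^ 2 := by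
  have hn0 : (0:ℝ) < n := by exact_mod_cast hn
  set z' : EuclideanSpace ℝ (Fin d) := z - γ • v with hz'
  have hdz : z' - z = -(γ • v) := by rw [hz']; abel
  set Q : ℝ := inner ℝ (opAvg F z' - opAvg F z) v with hQ
  set V : ℝ := ‖v‖ ^ 2 with hV
  set S : ℝ := ∑ i : Fin n, ‖F i z' - F i z‖ ^ 2 with hS
  have hS0 : 0 ≤ S := Finset.sum_nonneg fun i _ => sq_nonneg _
  have hV0 : 0 ≤ V := sq_nonneg _
  -- sum of D relates to Q
  have hsumD : (inner ℝ (∑ i : Fin n, (F i z' - F i z)) v : ℝ) = (n : ℝ) * Q := by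
    rw [hQ, avg_sub, real_inner_smul_left]
    field_simp
  -- expansion
  have hexp : ∑ i : Fin n, ‖(sarahStep γ F i (z, v)).2‖ ^ 2
      = S + 2 * ((n:ℝ) * Q) + (n:ℝ) * V := by
    have : ∀ i : Fin n, ‖(sarahStep γ F i (z, v)).2‖ ^ 2
        = ‖F i z' - F i z‖ ^ 2 + 2 * (inner ℝ (F i z' - F i z) v : ℝ) + V := by
      intro i
      have : (sarahStep γ F i (z, v)).2 = (F i z' - F i z) + v := rfl
      rw [this, norm_add_sq_real]
    rw [Finset.sum_congr rfl fun i _ => this i]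
    rw [Finset.sum_add_distrib, Finset.sum_add_distrib, ← Finset.mul_sum, ← sum_inner, hsumD]
    simp [Finset.sum_const, Finset.card_univ, hS]
  -- strong monotonicity
  have hdz2 : ‖z' - z‖ ^ 2 = γ ^ 2 * V := by
    rw [hdz, norm_neg, norm_smul, mul_pow, hV, Real.norm_eq_abs, sq_abs]
  have hPQ : (inner ℝ (opAvg F z' - opAvg F z) (z' - z) : ℝ) = -(γ * Q) := by
    rw [hdz, inner_neg_right, real_inner_smul_right, hQ]
  have hA : μ * (γ ^ 2 * V) ≤ -(γ * Q) := by
    have := hsm z' z; rw [hdz2, hPQ] at this; exact this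
  -- cocoercivity
  have hB : S ≤ ℓ * ((n:ℝ) * -(γ * Q)) := by
    have h1 : S ≤ ℓ * ∑ i : Fin n, (inner ℝ (F i z' - F i z) (z' - z) : ℝ) := by
      rw [Finset.mul_sum]
      exact Finset.sum_le_sum fun i _ => hco i z' z
    have h2 : ∑ i : Fin n, (inner ℝ (F i z' - F i z) (z' - z) : ℝ)
        = (n:ℝ) * -(γ * Q) := by
      rw [← sum_inner, hdz, inner_neg_right, real_inner_smul_right, hsumD]
      ring
    rw [h2] at h1; exact h1
  -- arithmetic
  rw [hexp]
  have hQle : Q ≤ -(μ * γ * V) := by nlinarith [hA]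
  have hnQ : (n:ℝ) * Q ≤ (n:ℝ) * -(μ * γ * V) :=
    mul_le_mul_of_nonneg_left hQle (le_of_lt hn0)
  have hSle : S ≤ -((n:ℝ) * Q) := by nlinarith [hB, hS0, mul_pos hγ0 hℓ, hn0]
  nlinarith [hSle, hnQ]


lemma run_bound {d n : ℕ} (hn : 1 ≤ n) {ℓ μ γ : ℝ} (hℓ : 0 < ℓ) (hγ0 : 0 < γ)
    (hγℓ : γ * ℓ ≤ 1) (hc : 0 ≤ 1 - γ * μ)
    (F : Fin n → EuclideanSpace ℝ (Fin d) → EuclideanSpace ℝ (Fin d))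
    (hco : ∀ i, Cocoercive ℓ (F i)) (hsm : StronglyMonotone μ (opAvg F)) :
    ∀ (K : ℕ) (z v : EuclideanSpace ℝ (Fin d)),
      ∑ j : Fin K → Fin n, ‖(sarahRun γ F (z, v) (List.ofFn j)).2‖ ^ 2
        ≤ ((n : ℝ) * (1 - γ * μ)) ^ K * ‖v‖ ^ 2 := by
  intro K
  induction K with
  | zero =>
    intro z v
    simp [sarahRun, List.ofFn_zero]
  | succ K ih =>
    intro z v
    have hn0 : (0:ℝ) ≤ n := by positivity
    have hpow : (0:ℝ) ≤ ((n : ℝ) * (1 - γ * μ)) ^ K := by positivity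
    have hsplit : ∑ j : Fin (K+1) → Fin n, ‖(sarahRun γ F (z, v) (List.ofFn j)).2‖ ^ 2
        = ∑ p : Fin n × (Fin K → Fin n),
            ‖(sarahRun γ F (sarahStep γ F p.1 (z, v)) (List.ofFn p.2)).2‖ ^ 2 := by
      rw [← Fintype.sum_equiv (Fin.consEquiv fun _ : Fin (K+1) => Fin n)
        (fun p => ‖(sarahRun γ F (sarahStep γ F p.1 (z, v)) (List.ofFn p.2)).2‖ ^ 2)
        (fun j => ‖(sarahRun γ F (z, v) (List.ofFn j)).2‖ ^ 2)]
      intro p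
      have hofn : List.ofFn (Fin.consEquiv (fun _ : Fin (K+1) => Fin n) p)
          = p.1 :: List.ofFn p.2 := by
        simp [Fin.consEquiv, List.ofFn_succ, Fin.cons_zero, Fin.cons_succ]
      rw [hofn]
      rfl
    rw [hsplit, Fintype.sum_prod_type]
    have hstep : ∀ i : Fin n,
        ∑ j : Fin K → Fin n,
          ‖(sarahRun γ F (sarahStep γ F i (z, v)) (List.ofFn j)).2‖ ^ 2
        ≤ ((n : ℝ) * (1 - γ * μ)) ^ K * ‖(sarahStep γ F i (z, v)).2‖ ^ 2 := by
      intro i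
      have := ih (sarahStep γ F i (z, v)).1 (sarahStep γ F i (z, v)).2
      simpa using this
    calc ∑ i : Fin n, ∑ j : Fin K → Fin n,
          ‖(sarahRun γ F (sarahStep γ F i (z, v)) (List.ofFn j)).2‖ ^ 2
        ≤ ∑ i : Fin n, ((n : ℝ) * (1 - γ * μ)) ^ K * ‖(sarahStep γ F i (z, v)).2‖ ^ 2 :=
          Finset.sum_le_sum fun i _ => hstep i
      _ = ((n : ℝ) * (1 - γ * μ)) ^ K * ∑ i : Fin n, ‖(sarahStep γ F i (z, v)).2‖ ^ 2 := by
          rw [Finset.mul_sum]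
      _ ≤ ((n : ℝ) * (1 - γ * μ)) ^ K * ((n : ℝ) * (1 - γ * μ) * ‖v‖ ^ 2) :=
          mul_le_mul_of_nonneg_left (step_sum_bound hn hℓ hγ0 hγℓ F hco hsm z v) hpow
      _ = ((n : ℝ) * (1 - γ * μ)) ^ (K+1) * ‖v‖ ^ 2 := by ring

lemma mu_le_ell {d n : ℕ} (hd : 0 < d) (hn : 1 ≤ n) {ℓ μ : ℝ} (hℓ : 0 < ℓ)
    (F : Fin n → EuclideanSpace ℝ (Fin d) → EuclideanSpace ℝ (Fin d))
    (hco : ∀ i, Cocoercive ℓ (F i)) (hsm : StronglyMonotone μ (opAvg F)) :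
    μ ≤ ℓ := by
  have hn0 : (0:ℝ) < n := by exact_mod_cast hn
  set w : EuclideanSpace ℝ (Fin d) := EuclideanSpace.single (⟨0, hd⟩ : Fin d) (1:ℝ) with hw
  have hwn : ‖w‖ = 1 := by rw [hw, EuclideanSpace.norm_single]; norm_num
  have hw0 : ‖w - 0‖ = 1 := by rw [sub_zero, hwn]
  have hDle : ∀ i : Fin n, (inner ℝ (F i w - F i 0) (w - 0) : ℝ) ≤ ℓ := by
    intro i
    have h1 := hco i w 0
    have h2 : (inner ℝ (F i w - F i 0) (w - 0) : ℝ) ≤ ‖F i w - F i 0‖ := by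
      calc (inner ℝ (F i w - F i 0) (w - 0) : ℝ) ≤ ‖F i w - F i 0‖ * ‖w - 0‖ :=
            real_inner_le_norm _ _
        _ = ‖F i w - F i 0‖ := by rw [hw0, mul_one]
    have hnn : (0:ℝ) ≤ ‖F i w - F i 0‖ := norm_nonneg _
    nlinarith [h1, h2, hnn]
  have hsum : (inner ℝ (opAvg F w - opAvg F 0) (w - 0) : ℝ) ≤ ℓ := by
    rw [avg_sub, real_inner_smul_left, sum_inner]
    have hsle : ∑ i : Fin n, (inner ℝ (F i w - F i 0) (w - 0) : ℝ) ≤ (n:ℝ) * ℓ := by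
      calc ∑ i : Fin n, (inner ℝ (F i w - F i 0) (w - 0) : ℝ)
          ≤ ∑ _i : Fin n, ℓ := Finset.sum_le_sum fun i _ => hDle i
        _ = (n:ℝ) * ℓ := by simp [Finset.sum_const, Finset.card_univ]
    calc (n:ℝ)⁻¹ * ∑ i : Fin n, (inner ℝ (F i w - F i 0) (w - 0) : ℝ)
        ≤ (n:ℝ)⁻¹ * ((n:ℝ) * ℓ) :=
          mul_le_mul_of_nonneg_left hsle (by positivity)
      _ = ℓ := by field_simp
  have := hsm w 0
  rw [hw0] at this
  simpa using this.trans hsum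

/-- **Lemma 1 (final form).** If each `F_i` is `ℓ`-cocoercive, the average `F` is
`μ`-strongly monotone and `0 < γ ≤ 1/ℓ`, then the SARAH inner loop satisfies
`𝔼[‖v^K‖²] ≤ (1 - γμ)^K ‖F(z^0)‖²`, where the expectation is the uniform average
over all `n^K` index sequences. -/
theorem sarah_vK_bound {d n : ℕ} (hn : 1 ≤ n) (ℓ μ : ℝ) (hℓ : 0 < ℓ) (hμ : 0 < μ)
    (F : Fin n → EuclideanSpace ℝ (Fin d) → EuclideanSpace ℝ (Fin d))
    (hco : ∀ i, Cocoercive ℓ (F i)) (hsm : StronglyMonotone μ (opAvg F))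
    (γ : ℝ) (hγ0 : 0 < γ) (hγ : γ ≤ 1 / ℓ)
    (K : ℕ) (hK : 1 ≤ K) (z0 : EuclideanSpace ℝ (Fin d)) :
    (∑ j : Fin K → Fin n, ‖(sarahTraj γ F z0 j K).2‖ ^ 2) / (n : ℝ) ^ K
      ≤ (1 - γ * μ) ^ K * ‖opAvg F z0‖ ^ 2 := by
  have hn0 : (0:ℝ) < n := by exact_mod_cast hn
  have hγℓ : γ * ℓ ≤ 1 := by
    rw [le_div_iff₀ hℓ] at hγ; exact hγ
  have htraj : ∀ j : Fin K → Fin n,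
      sarahTraj γ F z0 j K = sarahRun γ F (z0, opAvg F z0) (List.ofFn j) := by
    intro j
    unfold sarahTraj
    rw [List.take_of_length_le (by simp)]
  rcases Nat.eq_zero_or_pos d with hd | hd
  · subst hd
    have hz : ∀ x : EuclideanSpace ℝ (Fin 0), ‖x‖ = 0 := fun x => by
      rw [Subsingleton.elim x 0, norm_zero]
    simp [hz]
  · have hμℓ : μ ≤ ℓ := mu_le_ell hd hn hℓ F hco hsm
    have hc : 0 ≤ 1 - γ * μ := by nlinarith [hγℓ, hμℓ, hγ0]
    have hrb := run_bound hn hℓ hγ0 hγℓ hc F hco hsm K z0 (opAvg F z0)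
    rw [div_le_iff₀ (by positivity)]
    calc (∑ j : Fin K → Fin n, ‖(sarahTraj γ F z0 j K).2‖ ^ 2)
        = ∑ j : Fin K → Fin n, ‖(sarahRun γ F (z0, opAvg F z0) (List.ofFn j)).2‖ ^ 2 := by
          exact Finset.sum_congr rfl fun j _ => by rw [htraj j]
      _ ≤ ((n : ℝ) * (1 - γ * μ)) ^ K * ‖opAvg F z0‖ ^ 2 := hrb
      _ = (1 - γ * μ) ^ K * ‖opAvg F z0‖ ^ 2 * (n:ℝ) ^ K := by rw [mul_pow]; ring

end
end

section
/- Let n ≥ 1 and let F_1, …, F_n : ℝ^d → ℝ^d be operators with average F = (1/n)∑_{i=1}^n F_i. Suppose each F_i is ℓ-cocoercive and the stepsize satisfies 0 < γ with γℓ < 2. Then the SARAH inner-loop trajectory satisfies 𝔼[‖F(z^K) − v^K‖²] ≤ (γℓ/(2 − γℓ)) · ‖F(z⁰)‖². -/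
open Finset

noncomputable section

/-- Auxiliary : per-index bound from cocoercivity. -/
lemma sarah_D_bound {d : ℕ} {ℓ γ : ℝ} (hγ0 : 0 < γ) (hℓ : 0 < ℓ) (hγ : γ * ℓ < 2)
    {G : EuclideanSpace ℝ (Fin d) → EuclideanSpace ℝ (Fin d)} (hco : Cocoercive ℓ G)
    (z v : EuclideanSpace ℝ (Fin d)) :
    ‖G (z - γ • v) - G z‖ ^ 2
      ≤ γ * ℓ / (2 - γ * ℓ) * (‖v‖ ^ 2 - ‖G (z - γ • v) - G z + v‖ ^ 2) := by
  set D := G (z - γ • v) - G z with hD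
  have h1 : ‖D‖ ^ 2 ≤ ℓ * (inner ℝ D ((z - γ • v) - z) : ℝ) := hco _ _
  have h2 : (z - γ • v) - z = -(γ • v) := by abel
  have h3 : (inner ℝ D (-(γ • v)) : ℝ) = -(γ * (inner ℝ D v : ℝ)) := by
    rw [inner_neg_right, real_inner_smul_right]
  rw [h2, h3] at h1
  have hnorm : ‖D + v‖ ^ 2 = ‖D‖ ^ 2 + 2 * (inner ℝ D v : ℝ) + ‖v‖ ^ 2 :=
    norm_add_sq_real D v
  rw [div_mul_eq_mul_div, le_div_iff₀ (by linarith)]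
  nlinarith [h1, hnorm]

/-- Auxiliary: the Lyapunov quantity. -/
def sarahPhi {d n : ℕ} (c : ℝ)
    (F : Fin n → EuclideanSpace ℝ (Fin d) → EuclideanSpace ℝ (Fin d))
    (p : EuclideanSpace ℝ (Fin d) × EuclideanSpace ℝ (Fin d)) : ℝ :=
  ‖opAvg F p.1 - p.2‖ ^ 2 + c * ‖p.2‖ ^ 2

/-- Auxiliary: one averaged SARAH step decreases the Lyapunov quantity. -/
lemma sarah_avg_step {d n : ℕ} (hn : 1 ≤ n) {ℓ γ : ℝ} (hℓ : 0 < ℓ) (hγ0 : 0 < γ)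
    (hγ : γ * ℓ < 2)
    (F : Fin n → EuclideanSpace ℝ (Fin d) → EuclideanSpace ℝ (Fin d))
    (hco : ∀ i, Cocoercive ℓ (F i))
    (p : EuclideanSpace ℝ (Fin d) × EuclideanSpace ℝ (Fin d)) :
    ∑ i : Fin n, sarahPhi (γ * ℓ / (2 - γ * ℓ)) F (sarahStep γ F i p)
      ≤ (n : ℝ) * sarahPhi (γ * ℓ / (2 - γ * ℓ)) F p := by
  obtain ⟨z, v⟩ := p
  simp only [sarahPhi]
  set c := γ * ℓ / (2 - γ * ℓ) with hc
  have hcpos : 0 ≤ c := div_nonneg (by positivity) (by linarith)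
  have hne : (n : ℝ) ≠ 0 := by positivity
  set z' := z - γ • v with hz'
  set a := opAvg F z - v with ha
  set D := opAvg F z' - opAvg F z with hDdef
  set Di := fun i => F i z' - F i z with hDi
  have hsum_opAvg : ∀ w, ∑ i, F i w = (n : ℝ) • opAvg F w := by
    intro w; unfold opAvg; rw [smul_inv_smul₀ hne]
  have hsumDi : ∑ i, Di i = (n : ℝ) • D := by
    simp only [hDi]
    rw [Finset.sum_sub_distrib, hsum_opAvg, hsum_opAvg, ← smul_sub]
  have hterm1 : ∀ i : Fin n,
      opAvg F (sarahStep γ F i (z, v)).1 - (sarahStep γ F i (z, v)).2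
        = (a + D) - Di i := by
    intro i
    simp only [sarahStep, hDi, ha, hDdef]
    abel
  have hterm2 : ∀ i : Fin n, (sarahStep γ F i (z, v)).2 = Di i + v := by
    intro i; simp only [sarahStep, hDi]; rfl
  have hpt : ∀ i : Fin n,
      ‖opAvg F (sarahStep γ F i (z, v)).1 - (sarahStep γ F i (z, v)).2‖ ^ 2
        + c * ‖(sarahStep γ F i (z, v)).2‖ ^ 2
      ≤ ‖a + D‖ ^ 2 - 2 * (inner ℝ (a + D) (Di i) : ℝ) + c * ‖v‖ ^ 2 := by
    intro i
    rw [hterm1 i, hterm2 i]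
    have hDb : ‖Di i‖ ^ 2 ≤ c * (‖v‖ ^ 2 - ‖Di i + v‖ ^ 2) :=
      sarah_D_bound hγ0 hℓ hγ (hco i) z v
    have hexp : ‖(a + D) - Di i‖ ^ 2
        = ‖a + D‖ ^ 2 - 2 * (inner ℝ (a + D) (Di i) : ℝ) + ‖Di i‖ ^ 2 :=
      norm_sub_sq_real _ _
    nlinarith [hDb, hexp]
  show (∑ i : Fin n, (‖opAvg F (sarahStep γ F i (z, v)).1 - (sarahStep γ F i (z, v)).2‖ ^ 2
        + c * ‖(sarahStep γ F i (z, v)).2‖ ^ 2))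
      ≤ (n : ℝ) * (‖a‖ ^ 2 + c * ‖v‖ ^ 2)
  calc ∑ i : Fin n, (‖opAvg F (sarahStep γ F i (z, v)).1 - (sarahStep γ F i (z, v)).2‖ ^ 2
        + c * ‖(sarahStep γ F i (z, v)).2‖ ^ 2)
      ≤ ∑ i : Fin n, (‖a + D‖ ^ 2 - 2 * (inner ℝ (a + D) (Di i) : ℝ) + c * ‖v‖ ^ 2) :=
        Finset.sum_le_sum fun i _ => hpt i
    _ = (n : ℝ) * ‖a + D‖ ^ 2 - 2 * ((n : ℝ) * (inner ℝ (a + D) D : ℝ))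
          + (n : ℝ) * (c * ‖v‖ ^ 2) := by
        rw [Finset.sum_add_distrib, Finset.sum_sub_distrib, Finset.sum_const,
          Finset.sum_const, ← Finset.mul_sum, ← inner_sum, hsumDi,
          real_inner_smul_right]
        simp only [Finset.card_univ, Fintype.card_fin, nsmul_eq_mul]
        try ring
    _ ≤ (n : ℝ) * (‖a‖ ^ 2 + c * ‖v‖ ^ 2) := by
        have h1 : ‖a + D‖ ^ 2 = ‖a‖ ^ 2 + 2 * (inner ℝ a D : ℝ) + ‖D‖ ^ 2 :=
          norm_add_sq_real a D
        have h2 : (inner ℝ (a + D) D : ℝ) = (inner ℝ a D : ℝ) + ‖D‖ ^ 2 := by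
          rw [inner_add_left, real_inner_self_eq_norm_sq]
        have hn0 : (0 : ℝ) ≤ (n : ℝ) := by positivity
        nlinarith [h1, h2, mul_nonneg hn0 (sq_nonneg ‖D‖)]

lemma sarahRun_append {d n : ℕ} (γ : ℝ)
    (F : Fin n → EuclideanSpace ℝ (Fin d) → EuclideanSpace ℝ (Fin d))
    (p : EuclideanSpace ℝ (Fin d) × EuclideanSpace ℝ (Fin d)) (l l' : List (Fin n)) :
    sarahRun γ F p (l ++ l') = sarahRun γ F (sarahRun γ F p l) l' := by
  induction l generalizing p with
  | nil => rfl
  | cons a t ih =>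
    simp only [List.cons_append, sarahRun]
    exact ih _

/-- Auxiliary: the summed Lyapunov bound along the trajectory, by induction. -/
lemma sarah_run_sum {d n : ℕ} (hn : 1 ≤ n) {ℓ γ : ℝ} (hℓ : 0 < ℓ) (hγ0 : 0 < γ)
    (hγ : γ * ℓ < 2)
    (F : Fin n → EuclideanSpace ℝ (Fin d) → EuclideanSpace ℝ (Fin d))
    (hco : ∀ i, Cocoercive ℓ (F i)) (z0 : EuclideanSpace ℝ (Fin d)) (k : ℕ) :
    ∑ j : Fin k → Fin n,
        sarahPhi (γ * ℓ / (2 - γ * ℓ)) F (sarahRun γ F (z0, opAvg F z0) (List.ofFn j))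
      ≤ (n : ℝ) ^ k * (γ * ℓ / (2 - γ * ℓ) * ‖opAvg F z0‖ ^ 2) := by
  induction k with
  | zero =>
    rw [Fintype.sum_unique]
    simp [sarahPhi, sarahRun, List.ofFn_zero, sub_self]
  | succ k ih =>
    have hstep : ∀ (f : Fin k → Fin n) (i : Fin n),
        sarahRun γ F (z0, opAvg F z0) (List.ofFn (Fin.snoc f i : Fin (k+1) → Fin n))
          = sarahStep γ F i (sarahRun γ F (z0, opAvg F z0) (List.ofFn f)) := by
      intro f i
      have h1 : List.ofFn (Fin.snoc f i : Fin (k+1) → Fin n) = List.ofFn f ++ [i] := by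
        rw [List.ofFn_succ']
        simp [Fin.snoc_castSucc, Fin.snoc_last, List.concat_eq_append]
      rw [h1, sarahRun_append]
      rfl
    have hn0 : (0 : ℝ) ≤ (n : ℝ) := by positivity
    calc ∑ j : Fin (k+1) → Fin n,
          sarahPhi (γ * ℓ / (2 - γ * ℓ)) F (sarahRun γ F (z0, opAvg F z0) (List.ofFn j))
        = ∑ q : Fin n × (Fin k → Fin n),
            sarahPhi (γ * ℓ / (2 - γ * ℓ)) F
              (sarahRun γ F (z0, opAvg F z0)
                (List.ofFn (Fin.snocEquiv (fun _ => Fin n) q))) :=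
          (Equiv.sum_comp (Fin.snocEquiv fun _ => Fin n) _).symm
      _ = ∑ f : Fin k → Fin n, ∑ i : Fin n,
            sarahPhi (γ * ℓ / (2 - γ * ℓ)) F
              (sarahStep γ F i (sarahRun γ F (z0, opAvg F z0) (List.ofFn f))) := by
          rw [Fintype.sum_prod_type, Finset.sum_comm]
          refine Finset.sum_congr rfl fun f _ => Finset.sum_congr rfl fun i _ => ?_
          have : (Fin.snocEquiv (fun _ => Fin n) (i, f) : Fin (k+1) → Fin n)
              = Fin.snoc f i := by
            funext x; simp [Fin.snocEquiv]
          rw [this, hstep f i]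
      _ ≤ ∑ f : Fin k → Fin n,
            (n : ℝ) * sarahPhi (γ * ℓ / (2 - γ * ℓ)) F
              (sarahRun γ F (z0, opAvg F z0) (List.ofFn f)) :=
          Finset.sum_le_sum fun f _ => sarah_avg_step hn hℓ hγ0 hγ F hco _
      _ = (n : ℝ) * ∑ f : Fin k → Fin n,
            sarahPhi (γ * ℓ / (2 - γ * ℓ)) F
              (sarahRun γ F (z0, opAvg F z0) (List.ofFn f)) := by
          rw [Finset.mul_sum]
      _ ≤ (n : ℝ) * ((n : ℝ) ^ k * (γ * ℓ / (2 - γ * ℓ) * ‖opAvg F z0‖ ^ 2)) :=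
          mul_le_mul_of_nonneg_left ih hn0
      _ = (n : ℝ) ^ (k + 1) * (γ * ℓ / (2 - γ * ℓ) * ‖opAvg F z0‖ ^ 2) := by ring

/-- **Lemma 2.** If each `F_i` is `ℓ`-cocoercive and `0 < γ` with `γℓ < 2`, then the
SARAH inner loop satisfies `𝔼[‖F(z^K) - v^K‖²] ≤ (γℓ/(2 - γℓ)) ‖F(z^0)‖²`, where the
expectation is the uniform average over all `n^K` index sequences. -/
theorem sarah_FzK_minus_vK_bound {d n : ℕ} (hn : 1 ≤ n) (ℓ : ℝ) (hℓ : 0 < ℓ)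
    (F : Fin n → EuclideanSpace ℝ (Fin d) → EuclideanSpace ℝ (Fin d))
    (hco : ∀ i, Cocoercive ℓ (F i))
    (γ : ℝ) (hγ0 : 0 < γ) (hγ : γ * ℓ < 2)
    (K : ℕ) (hK : 1 ≤ K) (z0 : EuclideanSpace ℝ (Fin d)) :
    (∑ j : Fin K → Fin n,
        ‖opAvg F (sarahTraj γ F z0 j K).1 - (sarahTraj γ F z0 j K).2‖ ^ 2) / (n : ℝ) ^ K
      ≤ γ * ℓ / (2 - γ * ℓ) * ‖opAvg F z0‖ ^ 2 := by
  have hnK : (0 : ℝ) < (n : ℝ) ^ K := by positivity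
  rw [div_le_iff₀ hnK]
  have hcpos : 0 ≤ γ * ℓ / (2 - γ * ℓ) := div_nonneg (by positivity) (by linarith)
  have htake : ∀ j : Fin K → Fin n, (List.ofFn j).take K = List.ofFn j := by
    intro j
    exact List.take_of_length_le (by simp)
  calc ∑ j : Fin K → Fin n,
        ‖opAvg F (sarahTraj γ F z0 j K).1 - (sarahTraj γ F z0 j K).2‖ ^ 2
      ≤ ∑ j : Fin K → Fin n,
          sarahPhi (γ * ℓ / (2 - γ * ℓ)) F (sarahRun γ F (z0, opAvg F z0) (List.ofFn j)) := by
        refine Finset.sum_le_sum fun j _ => ?_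
        have h1 : sarahTraj γ F z0 j K = sarahRun γ F (z0, opAvg F z0) (List.ofFn j) := by
          rw [sarahTraj, htake j]
        rw [h1, sarahPhi]
        have := mul_nonneg hcpos
          (sq_nonneg ‖(sarahRun γ F (z0, opAvg F z0) (List.ofFn j)).2‖)
        linarith
    _ ≤ (n : ℝ) ^ K * (γ * ℓ / (2 - γ * ℓ) * ‖opAvg F z0‖ ^ 2) :=
        sarah_run_sum hn hℓ hγ0 hγ F hco z0 K
    _ = γ * ℓ / (2 - γ * ℓ) * ‖opAvg F z0‖ ^ 2 * (n : ℝ) ^ K := by ring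


end
end

section
/- Let n ≥ 1 and let F_1, …, F_n : ℝ^d → ℝ^d be operators with average F = (1/n)∑_{i=1}^n F_i. Suppose each F_i is ℓ-cocoercive and F is μ-strongly monotone. Take the stepsize γ = 2/(9ℓ) and any natural number K with K ≥ 10ℓ/μ. Then for every number of epochs S ≥ 1, the SARAH outer-loop iterates satisfy 𝔼[‖F(z̃^S)‖²] ≤ (1/2)^S · ‖F(z̃⁰)‖². -/
open Finset

noncomputable section

/-- The SARAH outer loop: starting from `z̃`, each epoch runs the inner loop
(restarted with `v^0 = F(z̃)`) along its list of indices and moves to the endpoint. -/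
def sarahOuter {d n : ℕ} (γ : ℝ)
    (F : Fin n → EuclideanSpace ℝ (Fin d) → EuclideanSpace ℝ (Fin d)) :
    EuclideanSpace ℝ (Fin d) → List (List (Fin n)) → EuclideanSpace ℝ (Fin d)
  | z, [] => z
  | z, l :: ls => sarahOuter γ F (sarahRun γ F (z, opAvg F z) l).1 ls

section SarahAux

variable {d n : ℕ}

private lemma sum_pi_fin_succ {α : Type*} [Fintype α] {k : ℕ}
    (g : (Fin (k + 1) → α) → ℝ) :
    ∑ j : Fin (k + 1) → α, g j = ∑ a : α, ∑ j : Fin k → α, g (Fin.cons a j) := by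
  calc ∑ j : Fin (k + 1) → α, g j
      = ∑ p : α × (Fin k → α), g (Fin.cons p.1 p.2) :=
        (Fintype.sum_bijective _ (Fin.consEquiv fun _ : Fin (k+1) => α).bijective
          (fun p : α × (Fin k → α) => g (Fin.cons p.1 p.2)) g fun p => rfl).symm
    _ = ∑ a : α, ∑ j : Fin k → α, g (Fin.cons a j) := Fintype.sum_prod_type _

private lemma ofFn_cons' {α : Type*} {k : ℕ} (a : α) (j : Fin k → α) :
    List.ofFn (Fin.cons a j) = a :: List.ofFn j := by
  rw [List.ofFn_succ]; simp

private lemma cK_le_eighth (ℓ μ : ℝ) (hℓ : 0 < ℓ) (hμ : 0 < μ) (K : ℕ)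
    (hK : 10 * ℓ / μ ≤ (K : ℝ)) :
    (max (1 - 32 * μ / (81 * ℓ)) 0) ^ K ≤ 1/8 := by
  have hKpos : 0 < K := by
    by_contra h
    push_neg at h
    interval_cases K
    · simp at hK
      nlinarith [div_pos (by linarith : (0:ℝ) < 10 * ℓ) hμ]
  set x : ℝ := 32 * μ / (81 * ℓ) with hx
  have hxpos : 0 < x := by positivity
  rcases le_or_gt (1 - x) 0 with hc | hc
  · rw [max_eq_right hc, zero_pow (by omega)]
    norm_num
  · rw [max_eq_left hc.le]
    have h1 : 1 - x ≤ Real.exp (-x) := by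
      have := Real.add_one_le_exp (-x)
      linarith
    have h2 : (1 - x) ^ K ≤ Real.exp (-x) ^ K :=
      pow_le_pow_left₀ hc.le h1 K
    have h3 : Real.exp (-x) ^ K = Real.exp ((K : ℝ) * (-x)) := by
      rw [← Real.exp_nat_mul]
    have h4 : (K : ℝ) * (-x) ≤ -(320/81) := by
      have hxK : (320:ℝ)/81 ≤ (K:ℝ) * x := by
        have := mul_le_mul_of_nonneg_right hK hxpos.le
        have heq : 10 * ℓ / μ * x = 320/81 := by
          rw [hx]; field_simp; ring
        linarith [heq ▸ this]
      linarith
    have h5 : Real.exp ((K : ℝ) * (-x)) ≤ Real.exp (-(320/81)) :=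
      Real.exp_le_exp.mpr h4
    have h6 : Real.exp (-(320/81 : ℝ)) ≤ 1/8 := by
      rw [Real.exp_neg]
      have h8 : (8:ℝ) ≤ Real.exp (320/81) := by
        have e3 : Real.exp 1 ^ 3 = Real.exp 3 := by
          rw [← Real.exp_nat_mul]; norm_num
        have hgt : (2.7182818283 : ℝ) < Real.exp 1 := Real.exp_one_gt_d9
        have hcube : (2.7182818283:ℝ)^3 ≤ Real.exp 1 ^ 3 :=
          pow_le_pow_left₀ (by norm_num) hgt.le 3
        have h27 : (8:ℝ) ≤ (2.7182818283:ℝ)^3 := by norm_num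
        have h83 : (8:ℝ) ≤ Real.exp 3 := by linarith
        have : Real.exp 3 ≤ Real.exp (320/81) := Real.exp_le_exp.mpr (by norm_num)
        linarith
      rw [show (1:ℝ)/8 = 8⁻¹ by norm_num]
      exact inv_anti₀ (by norm_num) h8
    calc (1-x)^K ≤ Real.exp (-x) ^ K := h2
      _ = Real.exp ((K:ℝ) * (-x)) := h3
      _ ≤ Real.exp (-(320/81)) := h5
      _ ≤ 1/8 := h6

private lemma sarah_step_bounds (ℓ μ : ℝ)
    (F : Fin n → EuclideanSpace ℝ (Fin d) → EuclideanSpace ℝ (Fin d))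
    (hn : 1 ≤ n) (hℓ : 0 < ℓ)
    (hco : ∀ i, Cocoercive ℓ (F i)) (hsm : StronglyMonotone μ (opAvg F))
    (z v : EuclideanSpace ℝ (Fin d)) :
    (∑ i : Fin n, ‖(sarahStep (2 / (9 * ℓ)) F i (z, v)).2‖ ^ 2
      ≤ (n : ℝ) * (1 - 32 * μ / (81 * ℓ)) * ‖v‖ ^ 2) ∧
    (∑ i : Fin n,
        (‖opAvg F (sarahStep (2 / (9 * ℓ)) F i (z, v)).1
            - (sarahStep (2 / (9 * ℓ)) F i (z, v)).2‖ ^ 2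
          + (1/8) * ‖(sarahStep (2 / (9 * ℓ)) F i (z, v)).2‖ ^ 2)
      ≤ (n : ℝ) * (‖opAvg F z - v‖ ^ 2 + (1/8) * ‖v‖ ^ 2)) := by
  have hγpos : 0 < 2 / (9 * ℓ) := by positivity
  set γ : ℝ := 2 / (9 * ℓ) with hγ
  have hn0 : (n : ℝ) ≠ 0 := Nat.cast_ne_zero.mpr (by omega)
  have hnpos : (0:ℝ) < n := Nat.cast_pos.mpr (by omega)
  set z' : EuclideanSpace ℝ (Fin d) := z - γ • v with hz'
  have hzz : z' - z = -(γ • v) := by rw [hz']; abel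
  set D : Fin n → EuclideanSpace ℝ (Fin d) := fun i => F i z' - F i z with hD
  set Δ : EuclideanSpace ℝ (Fin d) := opAvg F z' - opAvg F z with hΔ
  set w : EuclideanSpace ℝ (Fin d) := opAvg F z - v with hw
  -- cocoercivity per i
  have hA : ∀ i, (inner ℝ (D i) v : ℝ) ≤ -(9/2) * ‖D i‖^2 := by
    intro i
    have h := hco i z' z
    rw [hzz, inner_neg_right, real_inner_smul_right] at h
    have key : ℓ * -(γ * (inner ℝ (F i z' - F i z) v : ℝ))
        = -(2/9) * (inner ℝ (D i) v : ℝ) := by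
      rw [hγ, hD]; field_simp
    rw [key] at h
    have : ‖D i‖^2 ≤ -(2/9) * (inner ℝ (D i) v : ℝ) := h
    linarith
  -- sum of the D i
  have hDsum : ∑ i, D i = (n:ℝ) • Δ := by
    rw [hΔ]
    simp only [opAvg]
    rw [← smul_sub, smul_smul, mul_inv_cancel₀ hn0, one_smul, ← Finset.sum_sub_distrib]
  have hT : ∑ i, (inner ℝ (D i) v : ℝ) = (n:ℝ) * (inner ℝ Δ v : ℝ) := by
    rw [← sum_inner, hDsum, real_inner_smul_left]
  -- strong monotonicity
  have hB : (inner ℝ Δ v : ℝ) ≤ -(μ * γ) * ‖v‖^2 := by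
    have h := hsm z' z
    rw [hzz, inner_neg_right, real_inner_smul_right] at h
    rw [← hΔ] at h
    have hnrm : ‖-(γ • v)‖^2 = γ^2 * ‖v‖^2 := by
      rw [norm_neg, norm_smul, mul_pow, Real.norm_eq_abs, sq_abs]
    rw [hnrm] at h
    have h2 : γ * (inner ℝ Δ v : ℝ) ≤ γ * (-(μ * γ) * ‖v‖ ^ 2) := by nlinarith [h]
    exact le_of_mul_le_mul_left h2 hγpos
  -- notation for the sums
  have hstep1 : ∀ i : Fin n, (sarahStep γ F i (z,v)).1 = z' := fun _ => rfl
  have hstep2 : ∀ i : Fin n, (sarahStep γ F i (z,v)).2 = D i + v := fun _ => rfl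
  have hSD : 0 ≤ ∑ i, ‖D i‖^2 := Finset.sum_nonneg fun i _ => by positivity
  have hsum2 : ∑ i : Fin n, ‖(sarahStep γ F i (z,v)).2‖^2
      = (∑ i, ‖D i‖^2) + 2 * (∑ i, (inner ℝ (D i) v : ℝ)) + (n:ℝ) * ‖v‖^2 := by
    calc ∑ i : Fin n, ‖(sarahStep γ F i (z,v)).2‖^2
        = ∑ i : Fin n, (‖D i‖^2 + 2 * (inner ℝ (D i) v : ℝ) + ‖v‖^2) := by
          refine Finset.sum_congr rfl fun i _ => ?_
          rw [hstep2 i, norm_add_sq_real]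
      _ = (∑ i, ‖D i‖^2) + 2 * (∑ i, (inner ℝ (D i) v : ℝ)) + (n:ℝ) * ‖v‖^2 := by
          rw [Finset.sum_add_distrib, Finset.sum_add_distrib, ← Finset.mul_sum,
            Finset.sum_const, card_univ, Fintype.card_fin, nsmul_eq_mul]
  have hTs : ∑ i, (inner ℝ (D i) v : ℝ) ≤ -(9/2) * ∑ i, ‖D i‖^2 := by
    calc ∑ i, (inner ℝ (D i) v : ℝ) ≤ ∑ i, (-(9/2) * ‖D i‖^2) :=
          Finset.sum_le_sum fun i _ => hA i
      _ = -(9/2) * ∑ i, ‖D i‖^2 := by rw [← Finset.mul_sum]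
  have hTB : ∑ i, (inner ℝ (D i) v : ℝ) ≤ (n:ℝ) * (-(μ * γ) * ‖v‖^2) := by
    rw [hT]
    exact mul_le_mul_of_nonneg_left hB hnpos.le
  constructor
  · -- first bound
    rw [hsum2]
    have hcoef : (16/9) * ((n:ℝ) * (-(μ * γ) * ‖v‖^2)) + (n:ℝ) * ‖v‖^2
        = (n:ℝ) * (1 - 32 * μ / (81 * ℓ)) * ‖v‖^2 := by
      rw [hγ]; field_simp; ring
    linarith [hTs, hTB, hSD, hcoef]
  · -- second bound
    have hsum0 : ∑ i : Fin n, (Δ - D i) = 0 := by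
      rw [Finset.sum_sub_distrib, hDsum, Finset.sum_const, card_univ, Fintype.card_fin,
        ← Nat.cast_smul_eq_nsmul ℝ n Δ, sub_self]
    have hsumA : ∑ i : Fin n,
        ‖opAvg F (sarahStep γ F i (z,v)).1 - (sarahStep γ F i (z,v)).2‖^2
        = (n:ℝ) * ‖w‖^2 + ((∑ i, ‖D i‖^2) - (n:ℝ) * ‖Δ‖^2) := by
      have hvec : ∀ i : Fin n,
          opAvg F (sarahStep γ F i (z,v)).1 - (sarahStep γ F i (z,v)).2
            = w + (Δ - D i) := by
        intro i
        rw [hstep1 i, hstep2 i, hw, hΔ, hD]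
        abel
      calc ∑ i : Fin n, ‖opAvg F (sarahStep γ F i (z,v)).1 - (sarahStep γ F i (z,v)).2‖^2
          = ∑ i : Fin n, (‖w‖^2 + 2 * (inner ℝ w (Δ - D i) : ℝ) + ‖Δ - D i‖^2) := by
            refine Finset.sum_congr rfl fun i _ => ?_
            rw [hvec i, norm_add_sq_real]
        _ = (n:ℝ) * ‖w‖^2 + 2 * (inner ℝ w (∑ i : Fin n, (Δ - D i)) : ℝ)
              + ∑ i : Fin n, ‖Δ - D i‖^2 := by
            rw [Finset.sum_add_distrib, Finset.sum_add_distrib, inner_sum, ← Finset.mul_sum,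
              Finset.sum_const, card_univ, Fintype.card_fin, nsmul_eq_mul]
        _ = (n:ℝ) * ‖w‖^2 + ∑ i : Fin n, ‖Δ - D i‖^2 := by
            rw [hsum0, inner_zero_right]; ring
        _ = (n:ℝ) * ‖w‖^2 + ((∑ i, ‖D i‖^2) - (n:ℝ) * ‖Δ‖^2) := by
            congr 1
            calc ∑ i : Fin n, ‖Δ - D i‖^2
                = ∑ i : Fin n, (‖Δ‖^2 - 2 * (inner ℝ Δ (D i) : ℝ) + ‖D i‖^2) := by
                  refine Finset.sum_congr rfl fun i _ => ?_
                  rw [norm_sub_sq_real]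
              _ = (n:ℝ) * ‖Δ‖^2 - 2 * (inner ℝ Δ (∑ i, D i) : ℝ) + ∑ i, ‖D i‖^2 := by
                  rw [Finset.sum_add_distrib, Finset.sum_sub_distrib, inner_sum,
                    ← Finset.mul_sum, Finset.sum_const, card_univ, Fintype.card_fin,
                    nsmul_eq_mul]
              _ = (∑ i, ‖D i‖^2) - (n:ℝ) * ‖Δ‖^2 := by
                  rw [hDsum, real_inner_smul_right, real_inner_self_eq_norm_sq]; ring
    have hsplit : ∑ i : Fin n,
        (‖opAvg F (sarahStep γ F i (z,v)).1 - (sarahStep γ F i (z,v)).2‖^2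
          + (1/8) * ‖(sarahStep γ F i (z,v)).2‖^2)
        = (∑ i : Fin n, ‖opAvg F (sarahStep γ F i (z,v)).1 - (sarahStep γ F i (z,v)).2‖^2)
          + (1/8) * ∑ i : Fin n, ‖(sarahStep γ F i (z,v)).2‖^2 := by
      rw [Finset.sum_add_distrib, ← Finset.mul_sum]
    rw [hsplit, hsumA, hsum2]
    have hΔ0 : 0 ≤ (n:ℝ) * ‖Δ‖^2 := by positivity
    linarith [hTs, hSD, hΔ0]

private lemma sarah_run_sum_le (γ : ℝ)
    (F : Fin n → EuclideanSpace ℝ (Fin d) → EuclideanSpace ℝ (Fin d))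
    (g : EuclideanSpace ℝ (Fin d) × EuclideanSpace ℝ (Fin d) → ℝ) (c : ℝ) (hc : 0 ≤ c)
    (hstep : ∀ p, ∑ i : Fin n, g (sarahStep γ F i p) ≤ (n : ℝ) * c * g p) :
    ∀ (k : ℕ) (p : EuclideanSpace ℝ (Fin d) × EuclideanSpace ℝ (Fin d)),
      ∑ j : Fin k → Fin n, g (sarahRun γ F p (List.ofFn j))
        ≤ ((n : ℝ) * c) ^ k * g p := by
  intro k
  induction k with
  | zero =>
    intro p
    rw [Fintype.sum_unique (fun j : Fin 0 → Fin n => g (sarahRun γ F p (List.ofFn j)))]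
    simp [sarahRun]
  | succ k ih =>
    intro p
    rw [sum_pi_fin_succ (fun j => g (sarahRun γ F p (List.ofFn j)))]
    have hnc : (0:ℝ) ≤ (n:ℝ) * c := by positivity
    calc ∑ a : Fin n, ∑ j : Fin k → Fin n, g (sarahRun γ F p (List.ofFn (Fin.cons a j)))
        = ∑ a : Fin n, ∑ j : Fin k → Fin n,
            g (sarahRun γ F (sarahStep γ F a p) (List.ofFn j)) := by
          refine Finset.sum_congr rfl fun a _ => Finset.sum_congr rfl fun j _ => ?_
          rw [ofFn_cons']
          rfl
      _ ≤ ∑ a : Fin n, ((n:ℝ)*c)^k * g (sarahStep γ F a p) :=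
          Finset.sum_le_sum fun a _ => ih (sarahStep γ F a p)
      _ = ((n:ℝ)*c)^k * ∑ a : Fin n, g (sarahStep γ F a p) := by rw [← Finset.mul_sum]
      _ ≤ ((n:ℝ)*c)^k * ((n:ℝ)*c*g p) :=
          mul_le_mul_of_nonneg_left (hstep p) (pow_nonneg hnc k)
      _ = ((n:ℝ)*c)^(k+1) * g p := by ring

private lemma sarah_epoch (ℓ μ : ℝ)
    (F : Fin n → EuclideanSpace ℝ (Fin d) → EuclideanSpace ℝ (Fin d))
    (hn : 1 ≤ n) (hℓ : 0 < ℓ) (hμ : 0 < μ)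
    (hco : ∀ i, Cocoercive ℓ (F i)) (hsm : StronglyMonotone μ (opAvg F))
    (K : ℕ) (hK : 10 * ℓ / μ ≤ (K : ℝ)) (z : EuclideanSpace ℝ (Fin d)) :
    ∑ j : Fin K → Fin n,
      ‖opAvg F (sarahRun (2 / (9 * ℓ)) F (z, opAvg F z) (List.ofFn j)).1‖^2
      ≤ (n:ℝ)^K * ((1/2) * ‖opAvg F z‖^2) := by
  set γ : ℝ := 2 / (9 * ℓ) with hγ
  set c : ℝ := max (1 - 32*μ/(81*ℓ)) 0 with hc
  have hc0 : (0:ℝ) ≤ c := le_max_right _ _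
  have hnn : (0:ℝ) ≤ (n:ℝ) := Nat.cast_nonneg n
  have hstepA : ∀ p : EuclideanSpace ℝ (Fin d) × EuclideanSpace ℝ (Fin d),
      ∑ i : Fin n, ‖(sarahStep γ F i p).2‖^2 ≤ (n:ℝ) * c * ‖p.2‖^2 := by
    intro p
    have h := (sarah_step_bounds ℓ μ F hn hℓ hco hsm p.1 p.2).1
    have h2 : (n:ℝ) * (1 - 32*μ/(81*ℓ)) * ‖p.2‖^2 ≤ (n:ℝ) * c * ‖p.2‖^2 := by
      apply mul_le_mul_of_nonneg_right _ (by positivity)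
      exact mul_le_mul_of_nonneg_left (le_max_left _ _) hnn
    exact le_trans h h2
  have hstepB : ∀ p : EuclideanSpace ℝ (Fin d) × EuclideanSpace ℝ (Fin d),
      ∑ i : Fin n, (‖opAvg F (sarahStep γ F i p).1 - (sarahStep γ F i p).2‖^2
          + (1/8) * ‖(sarahStep γ F i p).2‖^2)
        ≤ (n:ℝ) * 1 * (‖opAvg F p.1 - p.2‖^2 + (1/8) * ‖p.2‖^2) := by
    intro p
    have h := (sarah_step_bounds ℓ μ F hn hℓ hco hsm p.1 p.2).2
    rw [mul_one]
    exact h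
  have h1 := sarah_run_sum_le γ F (fun p => ‖p.2‖^2) c hc0 hstepA K (z, opAvg F z)
  have h2 := sarah_run_sum_le γ F
    (fun p => ‖opAvg F p.1 - p.2‖^2 + (1/8) * ‖p.2‖^2) 1 zero_le_one hstepB K
    (z, opAvg F z)
  simp only [sub_self, norm_zero] at h2
  -- h2 RHS : ((n:ℝ)*1)^K * (0^2 + 1/8 * ‖opAvg F z‖^2)
  have hcK : c ^ K ≤ 1/8 := cK_le_eighth ℓ μ hℓ hμ K hK
  have hnK : (0:ℝ) ≤ (n:ℝ)^K := by positivity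
  have hFz : (0:ℝ) ≤ ‖opAvg F z‖^2 := by positivity
  have hpt : ∀ j : Fin K → Fin n,
      ‖opAvg F (sarahRun γ F (z, opAvg F z) (List.ofFn j)).1‖^2
        ≤ 2 * ‖(sarahRun γ F (z, opAvg F z) (List.ofFn j)).2‖^2
          + 2 * (‖opAvg F (sarahRun γ F (z, opAvg F z) (List.ofFn j)).1
              - (sarahRun γ F (z, opAvg F z) (List.ofFn j)).2‖^2
            + (1/8) * ‖(sarahRun γ F (z, opAvg F z) (List.ofFn j)).2‖^2) := by
    intro j
    set a := opAvg F (sarahRun γ F (z, opAvg F z) (List.ofFn j)).1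
    set b := (sarahRun γ F (z, opAvg F z) (List.ofFn j)).2
    have htri : ‖a‖ ≤ ‖b‖ + ‖a - b‖ := by
      calc ‖a‖ = ‖b + (a - b)‖ := by rw [add_sub_cancel]
        _ ≤ ‖b‖ + ‖a - b‖ := norm_add_le _ _
    have h8 : (0:ℝ) ≤ (1/8) * ‖b‖^2 := by positivity
    nlinarith [sq_nonneg (‖b‖ - ‖a - b‖), norm_nonneg a, norm_nonneg b, norm_nonneg (a - b)]
  calc ∑ j : Fin K → Fin n,
      ‖opAvg F (sarahRun γ F (z, opAvg F z) (List.ofFn j)).1‖^2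
      ≤ ∑ j : Fin K → Fin n,
        (2 * ‖(sarahRun γ F (z, opAvg F z) (List.ofFn j)).2‖^2
          + 2 * (‖opAvg F (sarahRun γ F (z, opAvg F z) (List.ofFn j)).1
              - (sarahRun γ F (z, opAvg F z) (List.ofFn j)).2‖^2
            + (1/8) * ‖(sarahRun γ F (z, opAvg F z) (List.ofFn j)).2‖^2)) :=
        Finset.sum_le_sum fun j _ => hpt j
    _ = 2 * (∑ j : Fin K → Fin n, ‖(sarahRun γ F (z, opAvg F z) (List.ofFn j)).2‖^2)
        + 2 * (∑ j : Fin K → Fin n,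
            (‖opAvg F (sarahRun γ F (z, opAvg F z) (List.ofFn j)).1
                - (sarahRun γ F (z, opAvg F z) (List.ofFn j)).2‖^2
              + (1/8) * ‖(sarahRun γ F (z, opAvg F z) (List.ofFn j)).2‖^2)) := by
        rw [Finset.sum_add_distrib, ← Finset.mul_sum, ← Finset.mul_sum]
    _ ≤ 2 * (((n:ℝ) * c)^K * ‖opAvg F z‖^2)
        + 2 * (((n:ℝ) * 1)^K * ((0:ℝ)^2 + (1/8) * ‖opAvg F z‖^2)) := by
        have hs1 : (∑ j : Fin K → Fin n,
            ‖(sarahRun γ F (z, opAvg F z) (List.ofFn j)).2‖^2)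
              ≤ ((n:ℝ) * c)^K * ‖opAvg F z‖^2 := h1
        have hs2 := h2
        linarith
    _ ≤ (n:ℝ)^K * ((1/2) * ‖opAvg F z‖^2) := by
        rw [mul_pow, mul_one]
        have hck : (n:ℝ)^K * c^K * ‖opAvg F z‖^2 ≤ (n:ℝ)^K * (1/8) * ‖opAvg F z‖^2 := by
          apply mul_le_mul_of_nonneg_right _ hFz
          exact mul_le_mul_of_nonneg_left hcK hnK
        nlinarith [hck]

end SarahAux


set_option maxHeartbeats 2000000 in
private lemma sarah_outer_le {d n : ℕ} (ℓ μ : ℝ)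
    (F : Fin n → EuclideanSpace ℝ (Fin d) → EuclideanSpace ℝ (Fin d))
    (hn : 1 ≤ n) (hℓ : 0 < ℓ) (hμ : 0 < μ)
    (hco : ∀ i, Cocoercive ℓ (F i)) (hsm : StronglyMonotone μ (opAvg F))
    (K : ℕ) (hK : 10 * ℓ / μ ≤ (K : ℝ)) :
    ∀ (S : ℕ) (z : EuclideanSpace ℝ (Fin d)),
      ∑ jj : Fin S → Fin K → Fin n,
        ‖opAvg F (sarahOuter (2 / (9 * ℓ)) F z (List.ofFn fun s => List.ofFn (jj s)))‖^2
        ≤ ((n:ℝ)^K * (1/2))^S * ‖opAvg F z‖^2 := by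
  intro S
  induction S with
  | zero =>
    intro z
    rw [Fintype.sum_unique (fun jj : Fin 0 → Fin K → Fin n =>
      ‖opAvg F (sarahOuter (2 / (9 * ℓ)) F z (List.ofFn fun s => List.ofFn (jj s)))‖^2)]
    simp [sarahOuter]
  | succ S ih =>
    intro z
    rw [sum_pi_fin_succ (fun jj : Fin (S+1) → Fin K → Fin n =>
      ‖opAvg F (sarahOuter (2 / (9 * ℓ)) F z (List.ofFn fun s => List.ofFn (jj s)))‖^2)]
    have hnn : (0:ℝ) ≤ (n:ℝ)^K * (1/2) := by positivity
    have hsoeq : ∀ (a : Fin K → Fin n) (j : Fin S → Fin K → Fin n),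
        sarahOuter (2 / (9 * ℓ)) F z
            (List.ofFn fun s => List.ofFn ((Fin.cons a j : Fin (S+1) → Fin K → Fin n) s))
          = sarahOuter (2 / (9 * ℓ)) F
              (sarahRun (2 / (9 * ℓ)) F (z, opAvg F z) (List.ofFn a)).1
              (List.ofFn fun s => List.ofFn (j s)) := by
      intro a j
      have hfun : (fun s : Fin (S+1) =>
              List.ofFn ((Fin.cons a j : Fin (S+1) → Fin K → Fin n) s))
          = Fin.cons (List.ofFn a) (fun s : Fin S => List.ofFn (j s)) := by
        funext s
        refine Fin.cases ?_ ?_ s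
        · simp
        · intro s'; simp
      rw [hfun, ofFn_cons']
      rfl
    simp only [hsoeq]
    refine le_trans (Finset.sum_le_sum (fun a _ =>
      ih ((sarahRun (2 / (9 * ℓ)) F (z, opAvg F z) (List.ofFn a)).1))) ?_
    rw [← Finset.mul_sum]
    refine le_trans (mul_le_mul_of_nonneg_left
      (sarah_epoch ℓ μ F hn hℓ hμ hco hsm K hK z) (pow_nonneg hnn S)) (le_of_eq (by ring))

/-- **Linear convergence of SARAH (outer loop).** If each `F_i` is `ℓ`-cocoercive and
the average `F` is `μ`-strongly monotone, then with stepsize `γ = 2/(9ℓ)`, any number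
of inner steps `K ≥ 10ℓ/μ` and any number of epochs `S ≥ 1`, the SARAH outer iterates
satisfy `𝔼[‖F(z̃^S)‖²] ≤ (1/2)^S ‖F(z̃^0)‖²`, where the expectation is the uniform
average over all `n^{SK}` tuples of index sequences `(i^1, …, i^S)`. -/
theorem sarah_linear_convergence {d n : ℕ} (hn : 1 ≤ n) (ℓ μ : ℝ) (hℓ : 0 < ℓ)
    (hμ : 0 < μ)
    (F : Fin n → EuclideanSpace ℝ (Fin d) → EuclideanSpace ℝ (Fin d))
    (hco : ∀ i, Cocoercive ℓ (F i)) (hsm : StronglyMonotone μ (opAvg F))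
    (K : ℕ) (hKμ : 10 * ℓ / μ ≤ (K : ℝ)) (S : ℕ) (hS : 1 ≤ S)
    (z0 : EuclideanSpace ℝ (Fin d)) :
    (∑ jj : Fin S → Fin K → Fin n,
        ‖opAvg F (sarahOuter (2 / (9 * ℓ)) F z0
            (List.ofFn fun s => List.ofFn (jj s)))‖ ^ 2) / (n : ℝ) ^ (S * K)
      ≤ (1 / 2) ^ S * ‖opAvg F z0‖ ^ 2 := by
  have h := sarah_outer_le ℓ μ F hn hℓ hμ hco hsm K hKμ S z0
  have hnpos : (0:ℝ) < (n:ℝ) := Nat.cast_pos.mpr (by omega)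
  have hpow : (0:ℝ) < (n:ℝ)^(S*K) := by positivity
  rw [div_le_iff₀ hpow]
  calc (∑ jj : Fin S → Fin K → Fin n,
        ‖opAvg F (sarahOuter (2 / (9 * ℓ)) F z0
            (List.ofFn fun s => List.ofFn (jj s)))‖ ^ 2)
      ≤ ((n:ℝ)^K * (1/2))^S * ‖opAvg F z0‖^2 := h
    _ = (1/2)^S * ‖opAvg F z0‖^2 * (n:ℝ)^(S*K) := by
        rw [mul_pow, ← pow_mul, Nat.mul_comm K S]
        ring


end
end

section
/- Let n ≥ 1 and let F_1, …, F_n : ℝ^d → ℝ^d be operators with average F = (1/n)∑_{i=1}^n F_i. Suppose each F_i is ℓ-cocoercive, F is μ-strongly monotone, and the stepsize satisfies 0 < γ ≤ 1/ℓ. Then the SARAH inner-loop trajectory satisfies 𝔼[‖F(z^K)‖²] ≤ (2γℓ/(2 − γℓ) + 2(1 − γμ)^K) · ‖F(z⁰)‖². -/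
open Finset

noncomputable section

section SarahAux

variable {d n : ℕ}

/-- Expanding the sum over index sequences of length `k+1` by the first index. -/
private lemma sum_step_rec {k : ℕ} (γ : ℝ)
    (F : Fin n → EuclideanSpace ℝ (Fin d) → EuclideanSpace ℝ (Fin d))
    (φ : EuclideanSpace ℝ (Fin d) × EuclideanSpace ℝ (Fin d) → ℝ)
    (p : EuclideanSpace ℝ (Fin d) × EuclideanSpace ℝ (Fin d)) :
    ∑ j : Fin (k+1) → Fin n, φ (sarahRun γ F p (List.ofFn j))
      = ∑ i : Fin n, ∑ j : Fin k → Fin n,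
          φ (sarahRun γ F (sarahStep γ F i p) (List.ofFn j)) := by
  rw [← (Fin.consEquiv (fun _ : Fin (k+1) => Fin n)).sum_comp
      (fun j => φ (sarahRun γ F p (List.ofFn j))), Fintype.sum_prod_type]
  refine Finset.sum_congr rfl fun i _ => Finset.sum_congr rfl fun j _ => ?_
  have h : List.ofFn ((Fin.consEquiv (fun _ : Fin (k+1) => Fin n)) (i, j))
      = i :: List.ofFn j := by
    rw [List.ofFn_succ]
    simp [Fin.consEquiv]
  rw [h]
  rfl

/-- The two per-step inequalities. -/
private lemma step_bounds (hn : 1 ≤ n) (γ ℓ μ : ℝ) (hγ0 : 0 < γ) (hℓ : 0 < ℓ)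
    (hμ : 0 < μ) (hγℓ : γ * ℓ ≤ 1)
    (F : Fin n → EuclideanSpace ℝ (Fin d) → EuclideanSpace ℝ (Fin d))
    (hco : ∀ i, Cocoercive ℓ (F i)) (hsm : StronglyMonotone μ (opAvg F))
    (c : ℝ) (hc0 : 0 ≤ c) (hcid : (1 + c) * (γ * ℓ) = 2 * c)
    (p : EuclideanSpace ℝ (Fin d) × EuclideanSpace ℝ (Fin d)) :
    (∑ i : Fin n, ‖(sarahStep γ F i p).2‖ ^ 2 ≤ n * ((1 - γ * μ) * ‖p.2‖ ^ 2)) ∧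
    (∑ i : Fin n, (‖opAvg F (sarahStep γ F i p).1 - (sarahStep γ F i p).2‖ ^ 2
        + c * ‖(sarahStep γ F i p).2‖ ^ 2)
      ≤ n * (‖opAvg F p.1 - p.2‖ ^ 2 + c * ‖p.2‖ ^ 2)) := by
  set z := p.1 with hz
  set v := p.2 with hv
  set z' := z - γ • v with hz'def
  have hnR : (0:ℝ) < n := by exact_mod_cast Nat.lt_of_lt_of_le Nat.zero_lt_one hn
  set w : Fin n → EuclideanSpace ℝ (Fin d) := fun i => F i z' - F i z with hw
  set wb : EuclideanSpace ℝ (Fin d) := opAvg F z' - opAvg F z with hwb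
  have hwsum : ∑ i, w i = (n:ℝ) • wb := by
    rw [hwb]
    simp only [opAvg]
    rw [← smul_sub, smul_smul, mul_inv_cancel₀ hnR.ne', one_smul, ← Finset.sum_sub_distrib]
  set A : ℝ := inner ℝ wb v with hA
  have hAsum : ∑ i, (inner ℝ (w i) v : ℝ) = n * A := by
    rw [← sum_inner, hwsum, real_inner_smul_left, hA]
  have hz'z : z' - z = -(γ • v) := by rw [hz'def]; abel
  have hS : ∑ i, ‖w i‖ ^ 2 ≤ ℓ * (-γ * (n * A)) := by
    have h1 : ∑ i, ‖w i‖ ^ 2 ≤ ∑ i, ℓ * (inner ℝ (w i) (z' - z) : ℝ) :=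
      Finset.sum_le_sum fun i _ => hco i z' z
    have h2 : ∑ i, ℓ * (inner ℝ (w i) (z' - z) : ℝ) = ℓ * (-γ * (n * A)) := by
      rw [← Finset.mul_sum]
      congr 1
      rw [hz'z]
      simp only [inner_neg_right, real_inner_smul_right]
      simp only [← neg_mul]
      rw [← Finset.mul_sum, hAsum]
    linarith [h1, h2.le, h2.ge]
  have hAle : A ≤ -(γ * μ) * ‖v‖ ^ 2 := by
    have h1 := hsm z' z
    have h2 : (inner ℝ (opAvg F z' - opAvg F z) (z' - z) : ℝ) = -γ * A := by
      rw [← hwb, hz'z, inner_neg_right, real_inner_smul_right, hA]; ring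
    have h3 : ‖z' - z‖ ^ 2 = γ ^ 2 * ‖v‖ ^ 2 := by
      rw [hz'z, norm_neg, norm_smul, mul_pow]
      congr 1
      rw [Real.norm_eq_abs, sq_abs]
    rw [h2, h3] at h1
    nlinarith [h1, hγ0]
  have hS0 : (0:ℝ) ≤ ∑ i, ‖w i‖ ^ 2 :=
    Finset.sum_nonneg fun i _ => sq_nonneg _
  have hV0 : (0:ℝ) ≤ ‖v‖ ^ 2 := sq_nonneg _
  have hA0 : A ≤ 0 := by nlinarith [hAle, mul_nonneg (mul_nonneg hγ0.le hμ.le) hV0]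
  have hstep1 : ∀ i, (sarahStep γ F i p).1 = z' := fun i => rfl
  have hstep2 : ∀ i, (sarahStep γ F i p).2 = w i + v := fun i => rfl
  have hsum2 : ∑ i : Fin n, ‖w i + v‖ ^ 2
      = (∑ i, ‖w i‖ ^ 2) + 2 * (n * A) + n * ‖v‖ ^ 2 := by
    simp only [norm_add_sq_real]
    rw [Finset.sum_add_distrib, Finset.sum_add_distrib, Finset.sum_const,
      card_univ, Fintype.card_fin, ← Finset.mul_sum, hAsum, nsmul_eq_mul]
  constructor
  · simp only [hstep2, hsum2]
    have h4 : (n:ℝ) * A ≤ (n:ℝ) * (-(γ * μ) * ‖v‖ ^ 2) := mul_le_mul_of_nonneg_left hAle hnR.le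
    have h5 : (0:ℝ) ≤ (1 - γ * ℓ) * ((n:ℝ) * (-A)) :=
      mul_nonneg (sub_nonneg.mpr hγℓ) (mul_nonneg hnR.le (neg_nonneg.mpr hA0))
    linarith [hS, h4, h5]
  · simp only [hstep1, hstep2]
    have hdecomp : ∀ i, opAvg F z' - (w i + v) = (opAvg F z - v) + (wb - w i) := by
      intro i
      rw [hwb, hw]
      abel
    have hesum : ∑ i, (wb - w i) = (0 : EuclideanSpace ℝ (Fin d)) := by
      rw [Finset.sum_sub_distrib, hwsum, Finset.sum_const, card_univ, Fintype.card_fin]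
      rw [← Nat.cast_smul_eq_nsmul ℝ]
      abel
    have hsum1 : ∑ i : Fin n, ‖opAvg F z' - (w i + v)‖ ^ 2
        = n * ‖opAvg F z - v‖ ^ 2 + ((∑ i, ‖w i‖ ^ 2) - n * ‖wb‖ ^ 2) := by
      have e1 : ∑ i : Fin n, ‖opAvg F z' - (w i + v)‖ ^ 2
          = ∑ i : Fin n, ‖(opAvg F z - v) + (wb - w i)‖ ^ 2 := by
        exact Finset.sum_congr rfl fun i _ => by rw [hdecomp i]
      rw [e1]
      simp only [norm_add_sq_real]
      rw [Finset.sum_add_distrib, Finset.sum_add_distrib, Finset.sum_const,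
        card_univ, Fintype.card_fin, nsmul_eq_mul, ← Finset.mul_sum, ← inner_sum, hesum,
        inner_zero_right]
      have e2 : ∑ i : Fin n, ‖wb - w i‖ ^ 2
          = (∑ i, ‖w i‖ ^ 2) - n * ‖wb‖ ^ 2 := by
        simp only [norm_sub_sq_real]
        rw [Finset.sum_add_distrib, Finset.sum_sub_distrib, Finset.sum_const,
          card_univ, Fintype.card_fin, nsmul_eq_mul, ← Finset.mul_sum, ← inner_sum, hwsum,
          real_inner_smul_right, real_inner_self_eq_norm_sq]
        ring
      rw [e2]
      ring
    rw [Finset.sum_add_distrib, hsum1, ← Finset.mul_sum, hsum2]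
    have hwb0 : (0:ℝ) ≤ ‖wb‖ ^ 2 := sq_nonneg _
    have h1c : (0:ℝ) ≤ 1 + c := by linarith
    have key : (1 + c) * (∑ i, ‖w i‖ ^ 2) ≤ (1 + c) * (ℓ * (-γ * (n * A))) :=
      mul_le_mul_of_nonneg_left hS h1c
    have key2 : (1 + c) * (ℓ * (-γ * (n * A))) = -(2 * c) * (n * A) := by
      linear_combination (-(n * A)) * hcid
    have hwbn : (0:ℝ) ≤ (n:ℝ) * ‖wb‖ ^ 2 := mul_nonneg hnR.le hwb0
    linarith [key, key2, hwbn]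

/-- Iterated bound for `‖v^k‖²`. -/
private lemma run_v_bound (hn : 1 ≤ n) (γ ℓ μ : ℝ) (hγ0 : 0 < γ) (hℓ : 0 < ℓ)
    (hμ : 0 < μ) (hγℓ : γ * ℓ ≤ 1) (hγμ : γ * μ ≤ 1)
    (F : Fin n → EuclideanSpace ℝ (Fin d) → EuclideanSpace ℝ (Fin d))
    (hco : ∀ i, Cocoercive ℓ (F i)) (hsm : StronglyMonotone μ (opAvg F))
    (c : ℝ) (hc0 : 0 ≤ c) (hcid : (1 + c) * (γ * ℓ) = 2 * c) :
    ∀ (k : ℕ) (p : EuclideanSpace ℝ (Fin d) × EuclideanSpace ℝ (Fin d)),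
      ∑ j : Fin k → Fin n, ‖(sarahRun γ F p (List.ofFn j)).2‖ ^ 2
        ≤ ((n : ℝ) * (1 - γ * μ)) ^ k * ‖p.2‖ ^ 2 := by
  intro k
  induction k with
  | zero =>
      intro p
      simp [sarahRun, List.ofFn_zero]
  | succ k ih =>
      intro p
      have hfac : (0:ℝ) ≤ ((n : ℝ) * (1 - γ * μ)) ^ k :=
        pow_nonneg (mul_nonneg (Nat.cast_nonneg n) (by linarith)) k
      calc ∑ j : Fin (k+1) → Fin n, ‖(sarahRun γ F p (List.ofFn j)).2‖ ^ 2
          = ∑ i : Fin n, ∑ j : Fin k → Fin n,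
              ‖(sarahRun γ F (sarahStep γ F i p) (List.ofFn j)).2‖ ^ 2 :=
            sum_step_rec γ F (fun q => ‖q.2‖ ^ 2) p
        _ ≤ ∑ i : Fin n, ((n : ℝ) * (1 - γ * μ)) ^ k * ‖(sarahStep γ F i p).2‖ ^ 2 :=
            Finset.sum_le_sum fun i _ => ih (sarahStep γ F i p)
        _ = ((n : ℝ) * (1 - γ * μ)) ^ k * ∑ i : Fin n, ‖(sarahStep γ F i p).2‖ ^ 2 := by
            rw [Finset.mul_sum]
        _ ≤ ((n : ℝ) * (1 - γ * μ)) ^ k * ((n : ℝ) * ((1 - γ * μ) * ‖p.2‖ ^ 2)) :=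
            mul_le_mul_of_nonneg_left
              (step_bounds hn γ ℓ μ hγ0 hℓ hμ hγℓ F hco hsm c hc0 hcid p).1 hfac
        _ = ((n : ℝ) * (1 - γ * μ)) ^ (k + 1) * ‖p.2‖ ^ 2 := by ring

/-- Iterated bound for the Lyapunov function. -/
private lemma run_phi_bound (hn : 1 ≤ n) (γ ℓ μ : ℝ) (hγ0 : 0 < γ) (hℓ : 0 < ℓ)
    (hμ : 0 < μ) (hγℓ : γ * ℓ ≤ 1)
    (F : Fin n → EuclideanSpace ℝ (Fin d) → EuclideanSpace ℝ (Fin d))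
    (hco : ∀ i, Cocoercive ℓ (F i)) (hsm : StronglyMonotone μ (opAvg F))
    (c : ℝ) (hc0 : 0 ≤ c) (hcid : (1 + c) * (γ * ℓ) = 2 * c) :
    ∀ (k : ℕ) (p : EuclideanSpace ℝ (Fin d) × EuclideanSpace ℝ (Fin d)),
      ∑ j : Fin k → Fin n,
          (‖opAvg F (sarahRun γ F p (List.ofFn j)).1 - (sarahRun γ F p (List.ofFn j)).2‖ ^ 2
            + c * ‖(sarahRun γ F p (List.ofFn j)).2‖ ^ 2)
        ≤ (n : ℝ) ^ k * (‖opAvg F p.1 - p.2‖ ^ 2 + c * ‖p.2‖ ^ 2) := by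
  intro k
  induction k with
  | zero =>
      intro p
      simp [sarahRun, List.ofFn_zero]
  | succ k ih =>
      intro p
      have hfac : (0:ℝ) ≤ (n : ℝ) ^ k := pow_nonneg (Nat.cast_nonneg n) k
      calc ∑ j : Fin (k+1) → Fin n,
              (‖opAvg F (sarahRun γ F p (List.ofFn j)).1
                  - (sarahRun γ F p (List.ofFn j)).2‖ ^ 2
                + c * ‖(sarahRun γ F p (List.ofFn j)).2‖ ^ 2)
          = ∑ i : Fin n, ∑ j : Fin k → Fin n,
              (‖opAvg F (sarahRun γ F (sarahStep γ F i p) (List.ofFn j)).1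
                  - (sarahRun γ F (sarahStep γ F i p) (List.ofFn j)).2‖ ^ 2
                + c * ‖(sarahRun γ F (sarahStep γ F i p) (List.ofFn j)).2‖ ^ 2) :=
            sum_step_rec γ F (fun q => ‖opAvg F q.1 - q.2‖ ^ 2 + c * ‖q.2‖ ^ 2) p
        _ ≤ ∑ i : Fin n, (n : ℝ) ^ k * (‖opAvg F (sarahStep γ F i p).1
                - (sarahStep γ F i p).2‖ ^ 2 + c * ‖(sarahStep γ F i p).2‖ ^ 2) :=
            Finset.sum_le_sum fun i _ => ih (sarahStep γ F i p)
        _ = (n : ℝ) ^ k * ∑ i : Fin n, (‖opAvg F (sarahStep γ F i p).1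
                - (sarahStep γ F i p).2‖ ^ 2 + c * ‖(sarahStep γ F i p).2‖ ^ 2) := by
            rw [Finset.mul_sum]
        _ ≤ (n : ℝ) ^ k * ((n : ℝ) * (‖opAvg F p.1 - p.2‖ ^ 2 + c * ‖p.2‖ ^ 2)) :=
            mul_le_mul_of_nonneg_left
              (step_bounds hn γ ℓ μ hγ0 hℓ hμ hγℓ F hco hsm c hc0 hcid p).2 hfac
        _ = (n : ℝ) ^ (k + 1) * (‖opAvg F p.1 - p.2‖ ^ 2 + c * ‖p.2‖ ^ 2) := by ring

end SarahAux

/-- **Combination of Lemmas 1 and 2.** If each `F_i` is `ℓ`-cocoercive, the average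
`F` is `μ`-strongly monotone and `0 < γ ≤ 1/ℓ`, then the SARAH inner loop satisfies
`𝔼[‖F(z^K)‖²] ≤ (2γℓ/(2 - γℓ) + 2(1 - γμ)^K) ‖F(z^0)‖²`, where the expectation is the
uniform average over all `n^K` index sequences. -/
theorem sarah_FzK_bound {d n : ℕ} (hn : 1 ≤ n) (ℓ μ : ℝ) (hℓ : 0 < ℓ) (hμ : 0 < μ)
    (F : Fin n → EuclideanSpace ℝ (Fin d) → EuclideanSpace ℝ (Fin d))
    (hco : ∀ i, Cocoercive ℓ (F i)) (hsm : StronglyMonotone μ (opAvg F))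
    (γ : ℝ) (hγ0 : 0 < γ) (hγ : γ ≤ 1 / ℓ)
    (K : ℕ) (hK : 1 ≤ K) (z0 : EuclideanSpace ℝ (Fin d)) :
    (∑ j : Fin K → Fin n,
        ‖opAvg F (sarahTraj γ F z0 j K).1‖ ^ 2) / (n : ℝ) ^ K
      ≤ (2 * γ * ℓ / (2 - γ * ℓ) + 2 * (1 - γ * μ) ^ K) * ‖opAvg F z0‖ ^ 2 := by
  -- notation
  have hnR : (0:ℝ) < n := by exact_mod_cast Nat.lt_of_lt_of_le Nat.zero_lt_one hn
  have hγℓ : γ * ℓ ≤ 1 := by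
    rw [← le_div_iff₀ hℓ] at *; exact hγ
  have h2γℓ : (0:ℝ) < 2 - γ * ℓ := by linarith
  -- trajectory = full run
  have htraj : ∀ j : Fin K → Fin n,
      sarahTraj γ F z0 j K = sarahRun γ F (z0, opAvg F z0) (List.ofFn j) := by
    intro j
    unfold sarahTraj
    congr 1
    exact List.take_of_length_le (le_of_eq List.length_ofFn)
  rcases Nat.eq_zero_or_pos d with hd | hd
  · -- trivial case d = 0
    subst hd
    haveI : Subsingleton (EuclideanSpace ℝ (Fin 0)) :=
      ⟨fun a b => by ext i; exact i.elim0⟩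
    have hz : ∀ x : EuclideanSpace ℝ (Fin 0), ‖x‖ = 0 := fun x => by
      rw [Subsingleton.elim x 0, norm_zero]
    have hL : (∑ j : Fin K → Fin n, ‖opAvg F (sarahTraj γ F z0 j K).1‖ ^ 2) = 0 := by
      apply Finset.sum_eq_zero
      intro j _
      rw [hz]; ring
    rw [hL, hz (opAvg F z0)]
    simp
  · -- main case: first show μ ≤ ℓ
    have hLipi : ∀ (i : Fin n) (u v : EuclideanSpace ℝ (Fin d)),
        ‖F i u - F i v‖ ≤ ℓ * ‖u - v‖ := by
      intro i u v
      have h1 := hco i u v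
      have h2 : (inner ℝ (F i u - F i v) (u - v) : ℝ) ≤ ‖F i u - F i v‖ * ‖u - v‖ :=
        real_inner_le_norm _ _
      rcases eq_or_lt_of_le (norm_nonneg (F i u - F i v)) with h0 | h0
      · rw [← h0]
        positivity
      · have h3 : ‖F i u - F i v‖ * ‖F i u - F i v‖ ≤ (ℓ * ‖u - v‖) * ‖F i u - F i v‖ := by
          nlinarith [h1, h2, mul_le_mul_of_nonneg_left h2 hℓ.le]
        exact le_of_mul_le_mul_right h3 h0
    have hLip : ∀ u v : EuclideanSpace ℝ (Fin d),
        ‖opAvg F u - opAvg F v‖ ≤ ℓ * ‖u - v‖ := by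
      intro u v
      have h1 : opAvg F u - opAvg F v = (n:ℝ)⁻¹ • ∑ i, (F i u - F i v) := by
        unfold opAvg
        rw [← smul_sub, ← Finset.sum_sub_distrib]
      rw [h1, norm_smul]
      have h2 : ‖∑ i, (F i u - F i v)‖ ≤ ∑ i : Fin n, ℓ * ‖u - v‖ :=
        le_trans (norm_sum_le _ _) (Finset.sum_le_sum fun i _ => hLipi i u v)
      rw [Finset.sum_const, card_univ, Fintype.card_fin, nsmul_eq_mul] at h2
      have h3 : ‖((n:ℝ)⁻¹ : ℝ)‖ = (n:ℝ)⁻¹ := by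
        rw [Real.norm_eq_abs, abs_of_nonneg (by positivity)]
      rw [h3]
      calc (n:ℝ)⁻¹ * ‖∑ i, (F i u - F i v)‖ ≤ (n:ℝ)⁻¹ * ((n:ℝ) * (ℓ * ‖u - v‖)) := by
            apply mul_le_mul_of_nonneg_left h2 (by positivity)
        _ = ℓ * ‖u - v‖ := by field_simp
    have hμℓ : μ ≤ ℓ := by
      set u : EuclideanSpace ℝ (Fin d) := 0
      set v : EuclideanSpace ℝ (Fin d) := EuclideanSpace.single ⟨0, hd⟩ 1
      have huv : ‖u - v‖ = 1 := by
        rw [zero_sub, norm_neg, EuclideanSpace.norm_single, norm_one]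
      have h1 := hsm u v
      have h2 : (inner ℝ (opAvg F u - opAvg F v) (u - v) : ℝ)
          ≤ ‖opAvg F u - opAvg F v‖ * ‖u - v‖ := real_inner_le_norm _ _
      have h3 := hLip u v
      rw [huv] at h1 h2 h3
      nlinarith [h1, h2, h3]
    have hγμ : γ * μ ≤ 1 := le_trans (by nlinarith) hγℓ
    -- the constant c
    set c : ℝ := γ * ℓ / (2 - γ * ℓ) with hc
    have hc0 : 0 ≤ c := div_nonneg (by positivity) h2γℓ.le
    have hcid : (1 + c) * (γ * ℓ) = 2 * c := by
      rw [hc]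
      field_simp
      ring
    -- bounds
    have hvb := run_v_bound hn γ ℓ μ hγ0 hℓ hμ hγℓ hγμ F hco hsm c hc0 hcid K
      (z0, opAvg F z0)
    have hpb := run_phi_bound hn γ ℓ μ hγ0 hℓ hμ hγℓ F hco hsm c hc0 hcid K
      (z0, opAvg F z0)
    simp only [sub_self, norm_zero] at hpb
    have hzero : (0:ℝ) ^ 2 = 0 := by norm_num
    rw [hzero, zero_add] at hpb
    -- pointwise bound on the summand
    have hpt : ∀ j : Fin K → Fin n,
        ‖opAvg F (sarahRun γ F (z0, opAvg F z0) (List.ofFn j)).1‖ ^ 2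
          ≤ 2 * (‖opAvg F (sarahRun γ F (z0, opAvg F z0) (List.ofFn j)).1
                - (sarahRun γ F (z0, opAvg F z0) (List.ofFn j)).2‖ ^ 2
              + c * ‖(sarahRun γ F (z0, opAvg F z0) (List.ofFn j)).2‖ ^ 2)
            + 2 * ‖(sarahRun γ F (z0, opAvg F z0) (List.ofFn j)).2‖ ^ 2 := by
      intro j
      set a := opAvg F (sarahRun γ F (z0, opAvg F z0) (List.ofFn j)).1
      set b := (sarahRun γ F (z0, opAvg F z0) (List.ofFn j)).2
      have h1 : ‖a‖ ≤ ‖a - b‖ + ‖b‖ := by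
        calc ‖a‖ = ‖(a - b) + b‖ := by rw [sub_add_cancel]
          _ ≤ ‖a - b‖ + ‖b‖ := norm_add_le _ _
      have h2 : ‖a‖ ^ 2 ≤ (‖a - b‖ + ‖b‖) ^ 2 := by
        have := pow_le_pow_left₀ (norm_nonneg a) h1 2
        exact this
      nlinarith [h2, sq_nonneg (‖a - b‖ - ‖b‖), mul_nonneg hc0 (sq_nonneg ‖b‖)]
    -- assemble
    have hnum : (∑ j : Fin K → Fin n, ‖opAvg F (sarahTraj γ F z0 j K).1‖ ^ 2)
        ≤ (n : ℝ) ^ K * ((2 * c + 2 * (1 - γ * μ) ^ K) * ‖opAvg F z0‖ ^ 2) := by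
      calc (∑ j : Fin K → Fin n, ‖opAvg F (sarahTraj γ F z0 j K).1‖ ^ 2)
          = ∑ j : Fin K → Fin n,
              ‖opAvg F (sarahRun γ F (z0, opAvg F z0) (List.ofFn j)).1‖ ^ 2 :=
            Finset.sum_congr rfl fun j _ => by rw [htraj j]
        _ ≤ ∑ j : Fin K → Fin n,
              (2 * (‖opAvg F (sarahRun γ F (z0, opAvg F z0) (List.ofFn j)).1
                  - (sarahRun γ F (z0, opAvg F z0) (List.ofFn j)).2‖ ^ 2
                + c * ‖(sarahRun γ F (z0, opAvg F z0) (List.ofFn j)).2‖ ^ 2)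
              + 2 * ‖(sarahRun γ F (z0, opAvg F z0) (List.ofFn j)).2‖ ^ 2) :=
            Finset.sum_le_sum fun j _ => hpt j
        _ = 2 * (∑ j : Fin K → Fin n,
              (‖opAvg F (sarahRun γ F (z0, opAvg F z0) (List.ofFn j)).1
                  - (sarahRun γ F (z0, opAvg F z0) (List.ofFn j)).2‖ ^ 2
                + c * ‖(sarahRun γ F (z0, opAvg F z0) (List.ofFn j)).2‖ ^ 2))
            + 2 * (∑ j : Fin K → Fin n,
              ‖(sarahRun γ F (z0, opAvg F z0) (List.ofFn j)).2‖ ^ 2) := by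
            rw [Finset.sum_add_distrib, Finset.mul_sum, Finset.mul_sum]
        _ ≤ 2 * ((n : ℝ) ^ K * (c * ‖opAvg F z0‖ ^ 2))
            + 2 * (((n : ℝ) * (1 - γ * μ)) ^ K * ‖opAvg F z0‖ ^ 2) := by
            exact add_le_add (mul_le_mul_of_nonneg_left hpb (by norm_num))
              (mul_le_mul_of_nonneg_left hvb (by norm_num))
        _ = (n : ℝ) ^ K * ((2 * c + 2 * (1 - γ * μ) ^ K) * ‖opAvg F z0‖ ^ 2) := by
            rw [mul_pow]
            ring
    rw [div_le_iff₀ (by positivity)]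
    have hcoef : 2 * γ * ℓ / (2 - γ * ℓ) + 2 * (1 - γ * μ) ^ K
        = 2 * c + 2 * (1 - γ * μ) ^ K := by
      rw [hc]
      field_simp
    rw [hcoef]
    calc (∑ j : Fin K → Fin n, ‖opAvg F (sarahTraj γ F z0 j K).1‖ ^ 2)
        ≤ (n : ℝ) ^ K * ((2 * c + 2 * (1 - γ * μ) ^ K) * ‖opAvg F z0‖ ^ 2) := hnum
      _ = (2 * c + 2 * (1 - γ * μ) ^ K) * ‖opAvg F z0‖ ^ 2 * (n : ℝ) ^ K := by ring


end
end

section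
/- Let n ≥ 1 and let F_1, …, F_n : ℝ^d → ℝ^d be operators with average F = (1/n)∑_{i=1}^n F_i. Suppose each F_i is ℓ-cocoercive and F is μ-strongly monotone. Fix z, w ∈ ℝ^d and a stepsize 0 < γ ≤ 1/ℓ, set z' = z − γw, and for each i ∈ {1, …, n} set v_i = F_i(z') − F_i(z) + w. Then (1/n)∑_{i=1}^n ‖v_i‖² ≤ (1 − γμ) · ‖w‖². -/
open Finset

noncomputable section

/-- **One-step version of Lemma 1.** If each `F_i` is `ℓ`-cocoercive, the average `F`
is `μ`-strongly monotone and `0 < γ ≤ 1/ℓ`, then one step of the SARAH recursion from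
iterate `z` with direction `w` (i.e. `z' = z - γw`, `v_i = F_i(z') - F_i(z) + w`)
satisfies `(1/n) ∑_i ‖v_i‖² ≤ (1 - γμ) ‖w‖²`. -/
theorem sarah_one_step_contraction {d n : ℕ} (hn : 1 ≤ n) (ℓ μ : ℝ) (hℓ : 0 < ℓ)
    (hμ : 0 < μ)
    (F : Fin n → EuclideanSpace ℝ (Fin d) → EuclideanSpace ℝ (Fin d))
    (hco : ∀ i, Cocoercive ℓ (F i)) (hsm : StronglyMonotone μ (opAvg F))
    (γ : ℝ) (hγ0 : 0 < γ) (hγ : γ ≤ 1 / ℓ)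
    (z w : EuclideanSpace ℝ (Fin d)) :
    (n : ℝ)⁻¹ * ∑ i, ‖F i (z - γ • w) - F i z + w‖ ^ 2
      ≤ (1 - γ * μ) * ‖w‖ ^ 2 := by
  have hnpos : (0:ℝ) < n := by exact_mod_cast hn
  set z' := z - γ • w with hz'
  set g : Fin n → EuclideanSpace ℝ (Fin d) := fun i => F i z' - F i z with hg
  have hdiff : z' - z = (-γ) • w := by
    rw [hz']; module
  -- cocoercivity rewritten
  have hco' : ∀ i, ‖g i‖ ^ 2 ≤ (-(ℓ*γ)) * (inner ℝ (g i) w : ℝ) := by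
    intro i
    have h := hco i z' z
    rw [hdiff] at h
    rw [real_inner_smul_right] at h
    calc ‖g i‖ ^ 2 ≤ ℓ * (-γ * inner ℝ (g i) w) := h
      _ = (-(ℓ*γ)) * (inner ℝ (g i) w : ℝ) := by ring
  -- strong monotonicity: inner ℝ (∑ g i) w ≤ -(n μ γ) ‖w‖²
  have hsum_avg : opAvg F z' - opAvg F z = (n:ℝ)⁻¹ • ∑ i, g i := by
    simp only [opAvg, hg, ← smul_sub, ← Finset.sum_sub_distrib]
  have hsm' : (inner ℝ (∑ i, g i) w : ℝ) ≤ -((n:ℝ) * μ * γ) * ‖w‖ ^ 2 := by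
    have h := hsm z' z
    rw [hsum_avg, hdiff, real_inner_smul_right, real_inner_smul_left] at h
    have hnw : ‖(-γ) • w‖ ^ 2 = γ^2 * ‖w‖^2 := by
      rw [norm_smul]; simp [mul_pow]
    rw [hnw] at h
    have h2 := mul_le_mul_of_nonneg_left h hnpos.le
    have h3 : (n:ℝ) * (-γ * ((n:ℝ)⁻¹ * (inner ℝ (∑ i, g i) w : ℝ)))
        = -γ * (inner ℝ (∑ i, g i) w : ℝ) := by
      field_simp
    rw [h3] at h2
    nlinarith [h2, hγ0]
  -- expand norms
  have hexp : ∀ i, ‖g i + w‖ ^ 2 = ‖g i‖^2 + 2 * (inner ℝ (g i) w : ℝ) + ‖w‖^2 := by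
    intro i
    rw [norm_add_sq_real]
  have key : ∑ i, ‖g i + w‖ ^ 2 ≤ (2 - ℓ*γ) * (inner ℝ (∑ i, g i) w : ℝ) + (n:ℝ) * ‖w‖^2 := by
    calc ∑ i, ‖g i + w‖ ^ 2
        ≤ ∑ i, ((2 - ℓ*γ) * (inner ℝ (g i) w : ℝ) + ‖w‖^2) := by
          apply Finset.sum_le_sum
          intro i _
          rw [hexp i]
          nlinarith [hco' i]
      _ = (2 - ℓ*γ) * (inner ℝ (∑ i, g i) w : ℝ) + (n:ℝ) * ‖w‖^2 := by
          rw [Finset.sum_add_distrib, ← Finset.mul_sum, sum_inner]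
          simp [Finset.card_univ, mul_comm]
  have hℓγ : ℓ * γ ≤ 1 := by
    have := (le_div_iff₀ hℓ).mp hγ
    linarith
  have hinnle : (inner ℝ (∑ i, g i) w : ℝ) ≤ 0 := by
    apply le_trans hsm'
    have : 0 ≤ (n:ℝ) * μ * γ * ‖w‖ ^ 2 :=
      mul_nonneg (mul_pos (mul_pos hnpos hμ) hγ0).le (sq_nonneg _)
    linarith
  have final : ∑ i, ‖g i + w‖ ^ 2 ≤ (n:ℝ) * ((1 - γ*μ) * ‖w‖^2) := by
    calc ∑ i, ‖g i + w‖ ^ 2 ≤ (2 - ℓ*γ) * (inner ℝ (∑ i, g i) w : ℝ) + (n:ℝ) * ‖w‖^2 := key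
      _ ≤ 1 * (inner ℝ (∑ i, g i) w : ℝ) + (n:ℝ) * ‖w‖^2 := by nlinarith [hinnle]
      _ ≤ 1 * (-((n:ℝ) * μ * γ) * ‖w‖ ^ 2) + (n:ℝ) * ‖w‖^2 := by nlinarith [hsm']
      _ = (n:ℝ) * ((1 - γ*μ) * ‖w‖^2) := by ring
  rw [inv_mul_le_iff₀ hnpos]
  exact final


end
end

section
/- Let n ≥ 1 and let F_1, …, F_n : ℝ^d → ℝ^d be operators with average F = (1/n)∑_{i=1}^n F_i. Suppose each F_i is ℓ-cocoercive and F is μ-strongly monotone. Fix z, w ∈ ℝ^d and a stepsize γ > 0, set z' = z − γw, and for each i ∈ {1, …, n} set v_i = F_i(z') − F_i(z) + w. Then (1/n)∑_{i=1}^n ‖v_i‖² ≤ (1 − γμ)·‖w‖² + ((γℓ − 1)/(γℓ)) · (1/n)∑_{i=1}^n ‖F_i(z') − F_i(z)‖². -/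
open Finset

noncomputable section

/-- **One-step estimate with the residual term.** If each `F_i` is `ℓ`-cocoercive, the
average `F` is `μ`-strongly monotone and `γ > 0`, then one step of the SARAH recursion
from iterate `z` with direction `w` (i.e. `z' = z - γw`, `v_i = F_i(z') - F_i(z) + w`)
satisfies
`(1/n) ∑_i ‖v_i‖² ≤ (1 - γμ)‖w‖² + ((γℓ - 1)/(γℓ)) (1/n) ∑_i ‖F_i(z') - F_i(z)‖²`. -/
theorem sarah_one_step_estimate {d n : ℕ} (hn : 1 ≤ n) (ℓ μ : ℝ) (hℓ : 0 < ℓ)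
    (hμ : 0 < μ)
    (F : Fin n → EuclideanSpace ℝ (Fin d) → EuclideanSpace ℝ (Fin d))
    (hco : ∀ i, Cocoercive ℓ (F i)) (hsm : StronglyMonotone μ (opAvg F))
    (γ : ℝ) (hγ0 : 0 < γ)
    (z w : EuclideanSpace ℝ (Fin d)) :
    (n : ℝ)⁻¹ * ∑ i, ‖F i (z - γ • w) - F i z + w‖ ^ 2
      ≤ (1 - γ * μ) * ‖w‖ ^ 2
        + (γ * ℓ - 1) / (γ * ℓ) * ((n : ℝ)⁻¹ * ∑ i, ‖F i (z - γ • w) - F i z‖ ^ 2) := by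
  set z' := z - γ • w with hz'
  have hzz : z' - z = -(γ • w) := by rw [hz']; abel
  have hγℓ : 0 < γ * ℓ := mul_pos hγ0 hℓ
  have hnpos : (0:ℝ) < (n:ℝ) := by exact_mod_cast hn
  have hninv : (0:ℝ) < (n:ℝ)⁻¹ := inv_pos.mpr hnpos
  -- per-operator bound
  have h1 : ∀ i, (inner ℝ (F i z' - F i z) w : ℝ) * (γ * ℓ) ≤ -‖F i z' - F i z‖ ^ 2 := by
    intro i
    have hc := hco i z' z
    rw [hzz, inner_neg_right, real_inner_smul_right] at hc
    nlinarith [hc]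
  have h1sum : (∑ i, (inner ℝ (F i z' - F i z) w : ℝ)) * (γ * ℓ)
      ≤ -∑ i, ‖F i z' - F i z‖ ^ 2 := by
    rw [Finset.sum_mul, ← Finset.sum_neg_distrib]
    exact Finset.sum_le_sum fun i _ => h1 i
  -- strong monotonicity bound
  have h2 : (n:ℝ)⁻¹ * ∑ i, (inner ℝ (F i z' - F i z) w : ℝ) ≤ -(γ * μ) * ‖w‖ ^ 2 := by
    have hs := hsm z' z
    rw [hzz] at hs
    have e1 : (inner ℝ (opAvg F z' - opAvg F z) (-(γ • w)) : ℝ)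
        = -γ * ((n:ℝ)⁻¹ * ∑ i, (inner ℝ (F i z' - F i z) w : ℝ)) := by
      have : opAvg F z' - opAvg F z = (n:ℝ)⁻¹ • ∑ i, (F i z' - F i z) := by
        simp [opAvg, Finset.sum_sub_distrib, smul_sub]
      rw [this, inner_neg_right, real_inner_smul_right, real_inner_smul_left,
        sum_inner]
      ring
    rw [e1] at hs
    have e2 : ‖-(γ • w)‖ ^ 2 = γ ^ 2 * ‖w‖ ^ 2 := by
      rw [norm_neg, norm_smul]
      simp [abs_of_pos hγ0, mul_pow]
    rw [e2] at hs
    nlinarith [hs]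
  -- expand the squared norms
  have hexp : ∀ i, ‖F i z' - F i z + w‖ ^ 2
      = ‖F i z' - F i z‖ ^ 2 + 2 * (inner ℝ (F i z' - F i z) w : ℝ) + ‖w‖ ^ 2 := by
    intro i
    exact norm_add_sq_real _ _
  have hsum : ∑ i, ‖F i z' - F i z + w‖ ^ 2
      = ∑ i, ‖F i z' - F i z‖ ^ 2 + 2 * (∑ i, (inner ℝ (F i z' - F i z) w : ℝ))
        + (n:ℝ) * ‖w‖ ^ 2 := by
    rw [Finset.sum_congr rfl fun i _ => hexp i]
    rw [Finset.sum_add_distrib, Finset.sum_add_distrib, Finset.mul_sum, Finset.sum_const]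
    simp [mul_comm]
  set S := ∑ i, ‖F i z' - F i z‖ ^ 2 with hS
  set I := ∑ i, (inner ℝ (F i z' - F i z) w : ℝ) with hI
  have hS0 : 0 ≤ S := Finset.sum_nonneg fun i _ => sq_nonneg _
  have key : (n:ℝ)⁻¹ * ∑ i, ‖F i z' - F i z + w‖ ^ 2
      = (n:ℝ)⁻¹ * S + 2 * ((n:ℝ)⁻¹ * I) + ‖w‖ ^ 2 := by
    rw [hsum]
    field_simp
  rw [key]
  have hIa0 : ((n:ℝ)⁻¹ * I) * (γ * ℓ) ≤ -((n:ℝ)⁻¹ * S) := by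
    nlinarith [mul_le_mul_of_nonneg_left h1sum (le_of_lt hninv)]
  have hIa : (n:ℝ)⁻¹ * I ≤ -((n:ℝ)⁻¹ * S) / (γ * ℓ) := (le_div_iff₀ hγℓ).mpr hIa0
  have hrhs : (γ * ℓ - 1) / (γ * ℓ) * ((n:ℝ)⁻¹ * S)
      = (n:ℝ)⁻¹ * S + -((n:ℝ)⁻¹ * S) / (γ * ℓ) := by
    field_simp
    ring
  rw [hrhs]
  linarith [hIa, h2]

end
end

section
/- Let G : ℝ^d → ℝ^d be an ℓ-cocoercive operator. Fix z, w ∈ ℝ^d and a stepsize γ > 0, set z' = z − γw and v = G(z') − G(z) + w. Then ‖v‖² ≤ ‖w‖² + ((γℓ − 2)/(γℓ)) · ‖v − w‖². -/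
open Finset

noncomputable section

/-- **Single-operator one-step bound.** If `G` is `ℓ`-cocoercive and `γ > 0`, then one
step of the SARAH recursion from iterate `z` with direction `w` (i.e. `z' = z - γw`,
`v = G(z') - G(z) + w`, so `v - w = G(z') - G(z)`) satisfies
`‖v‖² ≤ ‖w‖² + ((γℓ - 2)/(γℓ)) ‖v - w‖²`. -/
theorem sarah_single_step_bound {d : ℕ} (ℓ : ℝ) (hℓ : 0 < ℓ)
    (G : EuclideanSpace ℝ (Fin d) → EuclideanSpace ℝ (Fin d))
    (hco : Cocoercive ℓ G)
    (γ : ℝ) (hγ0 : 0 < γ)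
    (z w : EuclideanSpace ℝ (Fin d)) :
    ‖G (z - γ • w) - G z + w‖ ^ 2
      ≤ ‖w‖ ^ 2
        + (γ * ℓ - 2) / (γ * ℓ) * ‖(G (z - γ • w) - G z + w) - w‖ ^ 2 := by
  set Δ := G (z - γ • w) - G z with hΔ
  have hsimp : Δ + w - w = Δ := by abel
  rw [hsimp]
  have hco1 := hco (z - γ • w) z
  have hsub : (z - γ • w) - z = -(γ • w) := by abel
  rw [hsub] at hco1
  have hin : (inner ℝ Δ (-(γ • w)) : ℝ) = -(γ * inner ℝ Δ w) := by
    rw [inner_neg_right, real_inner_smul_right]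
  rw [hin] at hco1
  have hγℓ : 0 < γ * ℓ := mul_pos hγ0 hℓ
  have hinw : (inner ℝ Δ w : ℝ) ≤ -(‖Δ‖ ^ 2 / (γ * ℓ)) := by
    rw [le_neg, div_le_iff₀ hγℓ]
    nlinarith [hco1]
  have hexp : ‖Δ + w‖ ^ 2 = ‖Δ‖ ^ 2 + 2 * inner ℝ Δ w + ‖w‖ ^ 2 :=
    norm_add_sq_real Δ w
  rw [hexp]
  have h2 : (γ * ℓ - 2) / (γ * ℓ) * ‖Δ‖ ^ 2
      = ‖Δ‖ ^ 2 - 2 * (‖Δ‖ ^ 2 / (γ * ℓ)) := by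
    field_simp
  rw [h2]
  nlinarith [hinw]


end
end

section
/- Let n ≥ 1 and let F_1, …, F_n : ℝ^d → ℝ^d be operators, each ℓ-cocoercive. Fix z, w ∈ ℝ^d and a stepsize γ with 0 < γ and γℓ < 2, set z' = z − γw, and for each i ∈ {1, …, n} set v_i = F_i(z') − F_i(z) + w. Then (1/n)∑_{i=1}^n ‖v_i − w‖² ≤ (γℓ/(2 − γℓ)) · (‖w‖² − (1/n)∑_{i=1}^n ‖v_i‖²). -/
open Finset

noncomputable section

/-- **One-step increment bound.** If each `F_i` is `ℓ`-cocoercive and `0 < γ` with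
`γℓ < 2`, then one step of the SARAH recursion from iterate `z` with direction `w`
(i.e. `z' = z - γw`, `v_i = F_i(z') - F_i(z) + w`, so `v_i - w = F_i(z') - F_i(z)`)
satisfies `(1/n) ∑_i ‖v_i - w‖² ≤ (γℓ/(2 - γℓ)) (‖w‖² - (1/n) ∑_i ‖v_i‖²)`. -/
theorem sarah_increment_bound {d n : ℕ} (hn : 1 ≤ n) (ℓ : ℝ) (hℓ : 0 < ℓ)
    (F : Fin n → EuclideanSpace ℝ (Fin d) → EuclideanSpace ℝ (Fin d))
    (hco : ∀ i, Cocoercive ℓ (F i))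
    (γ : ℝ) (hγ0 : 0 < γ) (hγ : γ * ℓ < 2)
    (z w : EuclideanSpace ℝ (Fin d)) :
    (n : ℝ)⁻¹ * ∑ i, ‖(F i (z - γ • w) - F i z + w) - w‖ ^ 2
      ≤ γ * ℓ / (2 - γ * ℓ)
        * (‖w‖ ^ 2 - (n : ℝ)⁻¹ * ∑ i, ‖F i (z - γ • w) - F i z + w‖ ^ 2) := by
  have h2 : 0 < 2 - γ * ℓ := by linarith
  have key : ∀ i : Fin n,
      ‖(F i (z - γ • w) - F i z + w) - w‖ ^ 2 * (2 - γ * ℓ)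
        ≤ γ * ℓ * (‖w‖ ^ 2 - ‖F i (z - γ • w) - F i z + w‖ ^ 2) := by
    intro i
    set a := F i (z - γ • w) - F i z with ha
    have hco' := hco i (z - γ • w) z
    have hz : (z - γ • w) - z = -(γ • w) := by abel
    rw [hz] at hco'
    have hinner : (inner ℝ a (-(γ • w)) : ℝ) = -γ * inner ℝ a w := by
      rw [inner_neg_right, real_inner_smul_right]; ring
    rw [hinner] at hco'
    have hexp : ‖a + w‖ ^ 2 = ‖a‖ ^ 2 + 2 * (inner ℝ a w : ℝ) + ‖w‖ ^ 2 :=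
      norm_add_sq_real a w
    have hsimp : a + w - w = a := by abel
    rw [hsimp]
    nlinarith [norm_nonneg a, sq_nonneg ‖a‖]
  have hsum : ∑ i, ‖(F i (z - γ • w) - F i z + w) - w‖ ^ 2 * (2 - γ * ℓ)
      ≤ ∑ i, γ * ℓ * (‖w‖ ^ 2 - ‖F i (z - γ • w) - F i z + w‖ ^ 2) :=
    Finset.sum_le_sum fun i _ => key i
  rw [← Finset.sum_mul, ← Finset.mul_sum, Finset.sum_sub_distrib,
    Finset.sum_const, card_univ, Fintype.card_fin, nsmul_eq_mul] at hsum
  have hn' : (0 : ℝ) < n := by exact_mod_cast hn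
  have hinv : (n : ℝ)⁻¹ * n = 1 := inv_mul_cancel₀ hn'.ne'
  rw [div_mul_eq_mul_div, le_div_iff₀ h2]
  have hinvpos : (0 : ℝ) < (n : ℝ)⁻¹ := inv_pos.mpr hn'
  calc ((n : ℝ)⁻¹ * ∑ i, ‖F i (z - γ • w) - F i z + w - w‖ ^ 2) * (2 - γ * ℓ)
      = (n : ℝ)⁻¹ * ((∑ i, ‖F i (z - γ • w) - F i z + w - w‖ ^ 2) * (2 - γ * ℓ)) := by
        ring
    _ ≤ (n : ℝ)⁻¹ * (γ * ℓ * ((n : ℝ) * ‖w‖ ^ 2 - ∑ i, ‖F i (z - γ • w) - F i z + w‖ ^ 2)) :=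
        mul_le_mul_of_nonneg_left hsum hinvpos.le
    _ = γ * ℓ * (‖w‖ ^ 2 - (n : ℝ)⁻¹ * ∑ i, ‖F i (z - γ • w) - F i z + w‖ ^ 2) := by
        field_simp

end
end
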